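/- arXiv:1101.5621 — 2 statements merged into one kernel-verified Lean document; each statement's English description precedes it below -/
import Mathlib

section
/- For a (possibly infinite) matroid M, a minor N = M/C − D of M, and disjoint subsets X, Y ⊆ E(N), it holds that κ_N(X, Y) ≤ κ_M(X, Y). -/
open Set Matroid

variable {α : Type*}

/-- A circuit of a (possibly infinite) matroid: a minimal dependent set. -/
def Circuit (M : Matroid α) (C : Set α) : Prop :=
  M.Dep C ∧ ∀ C' ⊂ C, ¬ M.Dep C'

/-- A cocircuit: a circuit of the dual matroid. -/
def Cocircuit (M : Matroid α) (D : Set α) : Prop :=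
  Circuit M✶ D

/-- Deletion of the set `D` from the matroid `M`. -/
def delete (M : Matroid α) (D : Set α) : Matroid α :=
  M ↾ (M.E \ D)

/-- Contraction of the set `C` in the matroid `M`, i.e. `M/C = (M✶ − C)✶`. -/
def contract (M : Matroid α) (C : Set α) : Matroid α :=
  (_root_.delete M✶ C)✶

/-- `del M I J` : the minimum cardinality of a finite `F ⊆ I ∪ J` with
`(I ∪ J) \ F` independent in `M`, or `∞` if no such finite set exists. -/
noncomputable def del (M : Matroid α) (I J : Set α) : ℕ∞ :=
  sInf {n : ℕ∞ | ∃ F : Set α, F.Finite ∧ F ⊆ I ∪ J ∧ M.Indep ((I ∪ J) \ F) ∧ n = F.encard}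

/-- The connectivity function `κ_M(X)`, defined via `del` on bases of `M|X`
and `M|(E \ X)` (its value does not depend on the choice of bases). -/
noncomputable def conn (M : Matroid α) (X : Set α) : ℕ∞ :=
  ⨅ B ∈ {B | (M ↾ X).IsBase B}, ⨅ B' ∈ {B' | (M ↾ (M.E \ X)).IsBase B'}, del M B B'

/-- `κ_M(X,Y) = min {κ_M(U) : X ⊆ U ⊆ E(M) \ Y}`. -/
noncomputable def connBtw (M : Matroid α) (X Y : Set α) : ℕ∞ :=
  ⨅ U ∈ {U | X ⊆ U ∧ U ⊆ M.E \ Y}, conn M U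

/-- `x ~ y` iff `x = y` or some circuit contains both `x` and `y`. -/
def ConnRel (M : Matroid α) (x y : α) : Prop :=
  x = y ∨ ∃ C, Circuit M C ∧ x ∈ C ∧ y ∈ C

variable {M : Matroid α}

theorem contract_ground' (M : Matroid α) (C : Set α) : (_root_.contract M C).E = M.E \ C := by
  simp [_root_.contract, _root_.delete]

theorem delete_ground (M : Matroid α) (D : Set α) : (_root_.delete M D).E = M.E \ D := rfl

theorem contract_ground (M : Matroid α) (C : Set α) : (_root_.contract M C).E = M.E \ C := by
  simp [_root_.contract, _root_.delete]

theorem delete_delete (M : Matroid α) (A B : Set α) :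
    _root_.delete (_root_.delete M A) B = _root_.delete M (A ∪ B) := by
  unfold _root_.delete
  rw [restrict_ground_eq, restrict_restrict_eq _ diff_subset, diff_diff]

theorem contract_contract (M : Matroid α) (A B : Set α) :
    _root_.contract (_root_.contract M A) B = _root_.contract M (A ∪ B) := by
  unfold _root_.contract
  rw [dual_dual, _root_.delete_delete]

theorem lemEX (M : Matroid α) : ∀ (n : ℕ) (G I : Set α) (x : α), G.Finite → G.ncard ≤ n →
    I ⊆ M.E → G ⊆ M.E → x ∈ M.closure (I ∪ G) → x ∉ M.closure I →
    ∃ g ∈ G, M.closure (I ∪ G) ⊆ M.closure (insert x (I ∪ (G \ {g}))) := by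
  intro n
  induction n with
  | zero =>
    intro G I x hGfin hGcard _ _ hx hxI
    have hG0 : G = ∅ := (Set.ncard_eq_zero hGfin).mp (Nat.le_zero.mp hGcard)
    exact absurd (by simpa [hG0] using hx) hxI
  | succ n ih =>
    intro G I x hGfin hGcard hIE hGE hx hxI
    obtain rfl | hGne := G.eq_empty_or_nonempty
    · exact absurd (by simpa using hx) hxI
    by_cases hcase : ∃ g ∈ G, x ∈ M.closure (I ∪ (G \ {g}))
    · obtain ⟨g, hg, hxg⟩ := hcase
      have hcard' : (G \ {g}).ncard ≤ n := by
        have := Set.ncard_diff_singleton_lt_of_mem hg hGfin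
        omega
      obtain ⟨g', hg', hsub⟩ := ih (G \ {g}) I x (hGfin.diff) hcard' hIE
        ((diff_subset).trans hGE) hxg hxI
      refine ⟨g', hg'.1, ?_⟩
      have h1 : I ∪ G ⊆ M.closure (insert x (I ∪ (G \ {g'}))) := by
        have hsubcl : (insert x (I ∪ ((G \ {g}) \ {g'}))) ⊆ (insert x (I ∪ (G \ {g'}))) := by
          refine insert_subset_insert (union_subset_union_right _ ?_)
          exact diff_subset_diff_left diff_subset
        have hmono := (M.closure_subset_closure hsubcl)
        have hclE : insert x (I ∪ (G \ {g'})) ⊆ M.E :=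
          insert_subset (M.closure_subset_ground _ hx)
            (union_subset hIE ((diff_subset).trans hGE))
        rintro y (hy | hy)
        · exact M.subset_closure _ hclE (Or.inr (Or.inl hy))
        rcases eq_or_ne y g' with rfl | hne
        · have hy' : y ∈ M.closure (I ∪ (G \ {g})) :=
            M.subset_closure _ (union_subset hIE ((diff_subset).trans hGE)) (Or.inr hg')
          exact hmono (hsub hy')
        · exact M.subset_closure _ hclE (Or.inr (Or.inr ⟨hy, by simpa using hne⟩))
      exact M.closure_subset_closure_of_subset_closure h1
    · push_neg at hcase
      obtain ⟨g, hg⟩ := hGne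
      have hxg : x ∈ M.closure (insert g (I ∪ (G \ {g}))) \ M.closure (I ∪ (G \ {g})) := by
        constructor
        · have : insert g (I ∪ (G \ {g})) = I ∪ G := by
            ext y
            simp only [mem_insert_iff, mem_union, mem_diff, mem_singleton_iff]
            constructor
            · rintro (rfl | h | h); exacts [Or.inr hg, Or.inl h, Or.inr h.1]
            · rintro (h | h)
              · exact Or.inr (Or.inl h)
              · by_cases hyg : y = g
                · exact Or.inl hyg
                · exact Or.inr (Or.inr ⟨h, hyg⟩)
          rwa [this]
        · exact hcase g hg
      have hex := Matroid.closure_exchange hxg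
      refine ⟨g, hg, M.closure_subset_closure_of_subset_closure ?_⟩
      have hsub : I ∪ (G \ {g}) ⊆ M.closure (insert x (I ∪ (G \ {g}))) :=
        (subset_insert _ _).trans (M.subset_closure _
          (insert_subset (M.closure_subset_ground _ hx)
            (union_subset hIE ((diff_subset).trans hGE))))
      rintro y (hy | hy)
      · exact hsub (Or.inl hy)
      rcases eq_or_ne y g with rfl | hne
      · exact hex.1
      · exact hsub (Or.inr ⟨hy, hne⟩)

theorem lemEX' (M : Matroid α) (G I : Set α) (x : α) (hGfin : G.Finite)
    (hIE : I ⊆ M.E) (hGE : G ⊆ M.E) (hx : x ∈ M.closure (I ∪ G)) (hxI : x ∉ M.closure I) :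
    ∃ g ∈ G, M.closure (I ∪ G) ⊆ M.closure (insert x (I ∪ (G \ {g}))) :=
  lemEX M G.ncard G I x hGfin le_rfl hIE hGE hx hxI


theorem lemN (M : Matroid α) : ∀ (n : ℕ) (G I J : Set α), G.Finite → G.ncard ≤ n → G ⊆ M.E →
    M.Indep J → I ⊆ J → J ⊆ M.closure (I ∪ G) → (J \ I).encard ≤ G.encard := by
  intro n
  induction n with
  | zero =>
    intro G I J hGfin hGcard _ hJ hIJ hJcl
    have hG0 : G = ∅ := (Set.ncard_eq_zero hGfin).mp (Nat.le_zero.mp hGcard)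
    subst hG0
    rw [union_empty] at hJcl
    have : J \ I = ∅ := by
      rw [diff_eq_empty]
      intro x hxJ
      by_contra hxI
      have hx1 : x ∈ M.closure (J \ {x}) :=
        M.closure_subset_closure (subset_diff_singleton hIJ hxI) (hJcl hxJ)
      exact hJ.notMem_closure_diff_of_mem hxJ hx1
    simp [this]
  | succ n ih =>
    intro G I J hGfin hGcard hGE hJ hIJ hJcl
    by_cases hJI : J ⊆ M.closure I
    · have : J \ I = ∅ := by
        rw [diff_eq_empty]
        intro x hxJ
        by_contra hxI
        exact hJ.notMem_closure_diff_of_mem hxJ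
          (M.closure_subset_closure (subset_diff_singleton hIJ hxI) (hJI hxJ))
      simp [this]
    · obtain ⟨x, hxJ, hxI⟩ := not_subset.mp hJI
      have hxnI : x ∉ I := fun h => hxI (M.subset_closure I (hIJ.trans hJ.subset_ground) h)
      obtain ⟨g, hg, hsub⟩ := lemEX' M G I x hGfin (hIJ.trans hJ.subset_ground) hGE (hJcl hxJ) hxI
      have hstep : (J \ insert x I).encard ≤ (G \ {g}).encard := by
        refine ih (G \ {g}) (insert x I) J (hGfin.diff) ?_ ((diff_subset).trans hGE) hJ
          (insert_subset hxJ hIJ) ?_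
        · have := Set.ncard_diff_singleton_lt_of_mem hg hGfin
          omega
        · intro y hy
          have : y ∈ M.closure (insert x (I ∪ G \ {g})) := hsub (hJcl hy)
          rwa [show insert x I ∪ G \ {g} = insert x (I ∪ G \ {g}) by rw [insert_union]]
      have h1 : J \ I ⊆ insert x (J \ insert x I) := by
        intro y hy
        rcases eq_or_ne y x with rfl | hne
        · exact mem_insert _ _
        · exact Or.inr ⟨hy.1, by simp [hne, hy.2]⟩
      calc (J \ I).encard ≤ (insert x (J \ insert x I)).encard := Set.encard_le_encard h1
        _ ≤ (J \ insert x I).encard + 1 := Set.encard_insert_le _ _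
        _ ≤ (G \ {g}).encard + 1 := by gcongr
        _ = G.encard := Set.encard_diff_singleton_add_one hg

theorem lemN' (M : Matroid α) (G I J : Set α) (hGfin : G.Finite) (hGE : G ⊆ M.E)
    (hJ : M.Indep J) (hIJ : I ⊆ J) (hJcl : J ⊆ M.closure (I ∪ G)) :
    (J \ I).encard ≤ G.encard :=
  lemN M G.ncard G I J hGfin le_rfl hGE hJ hIJ hJcl


theorem conullity_eq {V V₀ Z : Set α} (hV : M.IsBasis V Z) (hV₀ : M.IsBasis V₀ Z) :
    (Z \ V).encard = (Z \ V₀).encard := by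
  have hd := (hV.restrict_isBase).encard_diff_comm (hV₀.restrict_isBase)
  have h1 : Z \ V = (V₀ \ V) ∪ (Z \ (V ∪ V₀)) := by
    ext x
    simp only [mem_diff, mem_union]
    constructor
    · rintro ⟨hxZ, hxV⟩
      by_cases hx : x ∈ V₀
      · exact Or.inl ⟨hx, hxV⟩
      · exact Or.inr ⟨hxZ, by simp [hxV, hx]⟩
    · rintro (⟨hx, hxV⟩ | ⟨hxZ, hx⟩)
      · exact ⟨hV₀.subset hx, hxV⟩
      · exact ⟨hxZ, fun h => hx (Or.inl h)⟩
  have h2 : Z \ V₀ = (V \ V₀) ∪ (Z \ (V ∪ V₀)) := by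
    ext x
    simp only [mem_diff, mem_union]
    constructor
    · rintro ⟨hxZ, hxV⟩
      by_cases hx : x ∈ V
      · exact Or.inl ⟨hx, hxV⟩
      · exact Or.inr ⟨hxZ, by simp [hxV, hx]⟩
    · rintro (⟨hx, hxV⟩ | ⟨hxZ, hx⟩)
      · exact ⟨hV.subset hx, hxV⟩
      · exact ⟨hxZ, fun h => hx (Or.inr h)⟩
  rw [h1, h2, Set.encard_union_eq (disjoint_of_subset_left diff_subset
      (disjoint_sdiff_right.mono_left (subset_union_right))),
    Set.encard_union_eq (disjoint_of_subset_left diff_subset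
      (disjoint_sdiff_right.mono_left (subset_union_left))), hd]

/-- Independence of `I ∪ B_C` does not depend on the choice of basis `B_C` of `C`. -/

theorem basis_exchange_indep {I B B' C : Set α} (hB : M.IsBasis B C) (hB' : M.IsBasis B' C)
    (hIC : Disjoint I C) (hind : M.Indep (I ∪ B')) : M.Indep (I ∪ B) := by
  have hIE : I ⊆ M.E := (subset_union_left).trans hind.subset_ground
  have hAE : I ∪ B' ∪ B ⊆ M.E := union_subset hind.subset_ground hB.indep.subset_ground
  obtain ⟨J, hJ, hBJ⟩ := hB.indep.subset_isBasis_of_subset (subset_union_right) hAE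
  have hJsub : J ⊆ B ∪ I := by
    intro b hbJ
    by_contra hb
    simp only [mem_union, not_or] at hb
    have hbC : b ∈ C := by
      have := hJ.subset hbJ
      rcases this with (h | h) | h
      · exact absurd h hb.2
      · exact hB'.subset h
      · exact absurd h hb.1
    have : b ∈ M.closure (J \ {b}) :=
      M.closure_subset_closure (subset_diff_singleton hBJ hb.1) (hB.subset_closure hbC)
    exact hJ.indep.notMem_closure_diff_of_mem hbJ this
  have hIJ : I ⊆ J := by
    intro i hi
    by_contra hiJ
    have hiB : i ∉ B := fun h => hIC.ne_of_mem hi (hB.subset h) rfl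
    have h1 : i ∈ M.closure J := hJ.subset_closure (Or.inl (Or.inl hi))
    have h2 : J ⊆ B ∪ (I \ {i}) := by
      intro y hy
      rcases hJsub hy with h | h
      · exact Or.inl h
      · exact Or.inr ⟨h, fun he => hiJ (he ▸ hy)⟩
    have h3 : B ∪ (I \ {i}) ⊆ M.closure (B' ∪ (I \ {i})) := by
      refine union_subset ?_ ?_
      · exact (hB.subset.trans (hB'.subset_closure)).trans
          (M.closure_subset_closure (subset_union_left))
      · exact (subset_union_right).trans (M.subset_closure _
          (union_subset hB'.indep.subset_ground ((diff_subset).trans hIE)))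
    have h4 : i ∈ M.closure (B' ∪ (I \ {i})) :=
      M.closure_subset_closure_of_subset_closure h3 (M.closure_subset_closure h2 h1)
    have h5 : i ∈ M.closure ((I ∪ B') \ {i}) := by
      have : B' ∪ (I \ {i}) ⊆ (I ∪ B') \ {i} := by
        rintro y (hy | hy)
        · exact ⟨Or.inr hy, fun he => hIC.ne_of_mem hi (hB'.subset (he ▸ hy)) rfl⟩
        · exact ⟨Or.inl hy.1, hy.2⟩
      exact M.closure_subset_closure this h4
    exact hind.notMem_closure_diff_of_mem (Or.inl hi) h5
  exact hJ.indep.subset (union_subset hIJ hBJ)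

theorem contract_indep_of_union_indep {I B_C C : Set α} (hBC : M.IsBasis B_C C)
    (hIC : Disjoint I C) (hind : M.Indep (I ∪ B_C)) : (_root_.contract M C).Indep I := by
  obtain ⟨W, hW, hsub⟩ := hind.exists_isBase_superset
  have hWC : B_C = W ∩ C :=
    hBC.eq_of_subset_indep (hW.indep.inter_right C)
      (subset_inter ((subset_union_right).trans hsub) hBC.subset) inter_subset_right
  have hWbasis : M.IsBasis (W ∩ C) C := hWC ▸ hBC
  have hdualbasis := (hW.inter_isBasis_iff_compl_inter_isBasis_dual hBC.subset_ground).1 hWbasis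
  rw [_root_.contract, dual_indep_iff_exists']
  refine ⟨?_, (M.E \ W) ∩ (M.E \ C), ?_, ?_⟩
  · show I ⊆ (M✶ ↾ (M✶.E \ C)).E
    rw [restrict_ground_eq, dual_ground]
    exact subset_diff.mpr ⟨(subset_union_left).trans hind.subset_ground, hIC⟩
  · show (M✶ ↾ (M✶.E \ C)).IsBase _
    rw [isBase_restrict_iff (by rw [dual_ground]; exact diff_subset)]
    rw [dual_ground]
    exact hdualbasis
  · exact disjoint_of_subset_right inter_subset_left
      (disjoint_sdiff_right.mono_left ((subset_union_left).trans hsub))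

/-- CC⇒ -/

theorem union_indep_of_contract_indep {I B_C C : Set α} (hBC : M.IsBasis B_C C)
    (hI : (_root_.contract M C).Indep I) : M.Indep (I ∪ B_C) ∧ I ⊆ M.E \ C := by
  rw [_root_.contract, _root_.delete, dual_indep_iff_exists'] at hI
  obtain ⟨hIsub, B_P, hBP, hdisj⟩ := hI
  rw [restrict_ground_eq, dual_ground] at hIsub
  rw [isBase_restrict_iff (show M✶.E \ C ⊆ M✶.E from diff_subset), dual_ground] at hBP
  -- B_P ∪ C is spanning in M✶
  have hCE : C ⊆ M.E := hBC.subset_ground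
  have hBPE : B_P ⊆ M.E := hBP.subset.trans diff_subset
  have hspan : M✶.Spanning (B_P ∪ C) := by
    rw [spanning_iff_ground_subset_closure (show B_P ∪ C ⊆ M✶.E by
      rw [dual_ground]; exact union_subset hBPE hCE)]
    intro x hx
    rw [dual_ground] at hx
    by_cases hxC : x ∈ C
    · exact M✶.subset_closure _ (by rw [dual_ground]; exact union_subset hBPE hCE) (Or.inr hxC)
    · exact M✶.closure_subset_closure (subset_union_left) (hBP.subset_closure ⟨hx, hxC⟩)
  obtain ⟨Q, hQ, hBPQ⟩ := hBP.indep.subset_isBasis_of_subset (subset_union_left)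
    (by rw [dual_ground]; exact union_subset hBPE hCE)
  have hQbase : M✶.IsBase Q := hQ.indep.isBase_of_spanning (by
    rw [spanning_iff_closure_eq hQ.indep.subset_ground, hQ.closure_eq_closure]
    rw [spanning_iff_closure_eq (by rw [dual_ground]; exact union_subset hBPE hCE)] at hspan
    exact hspan)
  set W := M.E \ Q with hWdef
  have hW : M.IsBase W := hQbase.compl_isBase_of_dual
  have hQE : Q ⊆ M.E := by have := hQbase.subset_ground; rwa [dual_ground] at this
  have hkey : (M.E \ W) ∩ (M.E \ C) = B_P := by
    rw [hWdef, diff_diff_cancel_left hQE]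
    apply subset_antisymm
    · rintro x ⟨hxQ, hxE, hxC⟩
      rcases hQ.subset hxQ with h | h
      · exact h
      · exact absurd h hxC
    · exact subset_inter hBPQ (hBP.subset)
  have hWC : M.IsBasis (W ∩ C) C := by
    refine (hW.inter_isBasis_iff_compl_inter_isBasis_dual hCE).2 ?_
    rw [hkey]
    exact hBP
  have hIW : I ⊆ W := by
    rw [hWdef, subset_diff]
    refine ⟨hIsub.trans diff_subset, ?_⟩
    refine Set.disjoint_left.mpr fun x hxI hxQ => ?_
    rcases hQ.subset hxQ with h | h
    · exact hdisj.ne_of_mem hxI h rfl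
    · exact (hIsub hxI).2 h
  have hIdisjC : Disjoint I C := Set.disjoint_left.mpr fun x hx => (hIsub hx).2
  have hind' : M.Indep (I ∪ (W ∩ C)) := hW.indep.subset (union_subset hIW inter_subset_left)
  exact ⟨basis_exchange_indep hBC hWC hIdisjC hind', hIsub⟩

/-- CB: recognizing bases of restrictions of a contraction. -/

theorem contract_basis_of {B₁ B_C C S : Set α} (hBC : M.IsBasis B_C C)
    (hB₁S : B₁ ⊆ S) (hSC : Disjoint S C) (hbasis : M.IsBasis (B₁ ∪ B_C) (S ∪ C)) :
    (_root_.contract M C).IsBasis B₁ S := by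
  have hSE : S ⊆ M.E := (subset_union_left).trans hbasis.subset_ground
  refine Indep.isBasis_of_forall_insert ?_ hB₁S ?_
  · exact contract_indep_of_union_indep hBC (hSC.mono_left hB₁S) hbasis.indep
  · intro e he
    rw [Matroid.Dep, contract_ground']
    constructor
    · intro hcon
      obtain ⟨hind, -⟩ := union_indep_of_contract_indep hBC hcon
      have : insert e B₁ ∪ B_C = insert e (B₁ ∪ B_C) := by rw [insert_union]
      rw [this] at hind
      refine (hbasis.insert_dep ⟨Or.inl he.1, ?_⟩).not_indep hind
      rintro (h | h)
      · exact he.2 h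
      · exact hSC.ne_of_mem he.1 (hBC.subset h) rfl
    · refine insert_subset ⟨hSE he.1, fun h => hSC.ne_of_mem he.1 h rfl⟩ ?_
      refine (hB₁S.trans (subset_diff.mpr ⟨hSE, hSC⟩))

theorem lemWD {U B B2 B' F : Set α} (hU : U ⊆ M.E) (hB : M.IsBasis B U) (hB2 : M.IsBasis B2 U)
    (hB' : M.IsBasis B' (M.E \ U)) (hF : F.Finite) (hFsub : F ⊆ B ∪ B')
    (hK : M.Indep ((B ∪ B') \ F)) :
    ∃ F2 : Set α, F2.Finite ∧ F2 ⊆ B2 ∪ B' ∧ M.Indep ((B2 ∪ B') \ F2) ∧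
      F2.encard ≤ F.encard := by
  set K := (B ∪ B') \ F with hKdef
  have hBU : B ⊆ U := hB.subset
  have hB2U : B2 ⊆ U := hB2.subset
  have hB'E : B' ⊆ M.E \ U := hB'.subset
  have hdisjBB' : Disjoint B B' := disjoint_sdiff_right.mono hBU hB'E
  have hdisjB2B' : Disjoint B2 B' := disjoint_sdiff_right.mono hB2U hB'E
  have hKE : K ⊆ M.E := (diff_subset).trans (union_subset (hBU.trans hU) (hB'E.trans diff_subset))
  -- T₁ : basis of B2 ∪ K containing B2
  obtain ⟨T₁, hT₁, hB2T₁⟩ := hB2.indep.subset_isBasis_of_subset (subset_union_left (t := K))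
    (union_subset (hB2U.trans hU) hKE)
  set J' := T₁ \ B2 with hJ'def
  have hT₁eq : T₁ = B2 ∪ J' := by rw [hJ'def, union_diff_self, union_eq_self_of_subset_left hB2T₁]
  have hJ'K : J' ⊆ K := fun x hx => (hT₁.subset hx.1).elim (fun h => absurd h hx.2) id
  have hJ'U : Disjoint J' U := by
    refine Set.disjoint_left.mpr fun x hxJ' hxU => ?_
    have hx1 : x ∈ M.closure (T₁ \ {x}) := by
      refine M.closure_subset_closure (subset_diff_singleton hB2T₁ hxJ'.2) ?_
      exact hB2.subset_closure hxU
    exact hT₁.indep.notMem_closure_diff_of_mem hxJ'.1 hx1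
  have hJ'B' : J' ⊆ B' \ F := by
    intro x hx
    have hxK := hJ'K hx
    rcases hxK.1 with h | h
    · exact absurd rfl (hJ'U.ne_of_mem hx (hBU h))
    · exact ⟨h, hxK.2⟩
  set L' := (B' \ F) \ T₁ with hL'def
  have hL'K : L' ⊆ K := fun x hx => ⟨Or.inr hx.1.1, hx.1.2⟩
  have hL'B' : L' ⊆ B' := fun x hx => hx.1.1
  -- Bound |L'| via lemN
  have hL'card : L'.encard ≤ (F ∩ B).encard := by
    have hFB_E : F ∩ B ⊆ M.E := (inter_subset_right).trans (hBU.trans hU)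
    have hIK : K \ L' ⊆ K := diff_subset
    have hBsub : B ⊆ (K \ L') ∪ (F ∩ B) := by
      intro x hxB
      by_cases hxF : x ∈ F
      · exact Or.inr ⟨hxF, hxB⟩
      · exact Or.inl ⟨⟨Or.inl hxB, hxF⟩, fun hL => (hdisjBB'.ne_of_mem hxB (hL'B' hL)) rfl⟩
    have hT₁cl : T₁ ⊆ M.closure ((K \ L') ∪ (F ∩ B)) := by
      rw [hT₁eq]
      refine union_subset ?_ ?_
      · refine (hB2U.trans (hB.subset_closure)).trans ?_
        exact M.closure_subset_closure_of_subset_closure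
          ((hBsub).trans (M.subset_closure _ (union_subset ((diff_subset).trans hKE) hFB_E)))
      · intro x hx
        refine M.subset_closure _ (union_subset ((diff_subset).trans hKE) hFB_E) ?_
        exact Or.inl ⟨hJ'K hx, fun hL => hL.2 (by rw [hT₁eq]; exact Or.inr hx)⟩
    have hKcl : K ⊆ M.closure ((K \ L') ∪ (F ∩ B)) := by
      intro y hy
      by_cases hyL : y ∈ L'
      · have : y ∈ M.closure T₁ := hT₁.subset_closure (Or.inr hy)
        have h2 := M.closure_subset_closure_of_subset_closure hT₁cl
        exact h2 this
      · exact M.subset_closure _ (union_subset ((diff_subset).trans hKE) hFB_E)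
          (Or.inl ⟨hy, hyL⟩)
    have hres := lemN' M (F ∩ B) (K \ L') K (hF.inter_of_left B) hFB_E hK diff_subset hKcl
    have hKK : K \ (K \ L') = L' := by
      ext x
      constructor
      · rintro ⟨hxK, hx⟩
        by_contra hxL
        exact hx ⟨hxK, hxL⟩
      · intro hx
        exact ⟨hL'K hx, fun h => h.2 hx⟩
    rwa [hKK] at hres
  -- the replacement set
  have hL'fin : L'.Finite :=
    Set.encard_lt_top_iff.mp (hL'card.trans_lt (hF.inter_of_left B).encard_lt_top)
  refine ⟨(F ∩ B') ∪ L', (hF.inter_of_left B').union hL'fin, ?_, ?_, ?_⟩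
  · exact union_subset ((inter_subset_right).trans subset_union_right)
      (hL'B'.trans subset_union_right)
  · have heq : (B2 ∪ B') \ ((F ∩ B') ∪ L') = T₁ := by
      rw [hT₁eq]
      ext x
      simp only [mem_diff, mem_union, mem_inter_iff, not_or, not_and]
      constructor
      · rintro ⟨hx | hx, h2, h3⟩
        · exact Or.inl hx
        · have hxF : x ∉ F := fun hF' => (h2 hF') hx
          have hxT : x ∈ T₁ := by
            by_contra hxT
            exact h3 (show x ∈ (B' \ F) \ T₁ from ⟨⟨hx, hxF⟩, hxT⟩)
          exact Or.inr ⟨hxT, fun hxB2 => absurd rfl (hdisjB2B'.ne_of_mem hxB2 hx)⟩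
      · rintro (hx | hx)
        · refine ⟨Or.inl hx, fun _ h => absurd rfl (hdisjB2B'.ne_of_mem hx h), fun hL =>
            absurd rfl (hdisjB2B'.ne_of_mem hx (hL'B' hL))⟩
        · have hxB' : x ∈ B' := (hJ'B' hx).1
          exact ⟨Or.inr hxB', fun hF' h => (hJ'B' hx).2 hF', fun hL => hL.2 hx.1⟩
    rw [heq]
    exact hT₁.indep
  · calc ((F ∩ B') ∪ L').encard ≤ (F ∩ B').encard + L'.encard := Set.encard_union_le _ _
      _ ≤ (F ∩ B').encard + (F ∩ B).encard := by gcongr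
      _ = ((F ∩ B') ∪ (F ∩ B)).encard := (Set.encard_union_eq
          ((hdisjBB'.symm).mono inter_subset_right inter_subset_right)).symm
      _ = F.encard := by rw [← inter_union_distrib_left, union_comm,
          inter_eq_self_of_subset_left hFsub]

theorem conn_le {S B₁ B₁' F : Set α} (hB : (M ↾ S).IsBase B₁)
    (hB' : (M ↾ (M.E \ S)).IsBase B₁') (hfin : F.Finite) (hsub : F ⊆ B₁ ∪ B₁')
    (hind : M.Indep ((B₁ ∪ B₁') \ F)) : conn M S ≤ F.encard := by
  refine le_trans (iInf₂_le B₁ hB) (le_trans (iInf₂_le B₁' hB') (sInf_le ?_))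
  exact ⟨F, hfin, hsub, hind, rfl⟩

theorem le_conn {S : Set α} {a : ℕ∞}
    (h : ∀ B B' F : Set α, (M ↾ S).IsBase B → (M ↾ (M.E \ S)).IsBase B' → F.Finite →
      F ⊆ B ∪ B' → M.Indep ((B ∪ B') \ F) → a ≤ F.encard) : a ≤ conn M S := by
  refine le_iInf₂ fun B hB => le_iInf₂ fun B' hB' => le_sInf ?_
  rintro n ⟨F, h1, h2, h3, rfl⟩
  exact h B B' F hB hB' h1 h2 h3

theorem conn_swap_le {U : Set α} (hU : U ⊆ M.E) : conn M (M.E \ U) ≤ conn M U := by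
  refine le_conn fun B B' F hB hB' hfin hsub hind => ?_
  refine conn_le hB' (show (M ↾ (M.E \ (M.E \ U))).IsBase B by
    rw [diff_diff_cancel_left hU]; exact hB) hfin ?_ ?_
  · rwa [union_comm]
  · rwa [union_comm]

theorem conn_delete_le {U D : Set α} (hU : U ⊆ M.E) (hD : D ⊆ U) :
    conn (_root_.delete M D) (U \ D) ≤ conn M U := by
  refine le_conn fun B B' F hB hB' hfin hsub hind => ?_
  rw [isBase_restrict_iff hU] at hB
  rw [isBase_restrict_iff (show M.E \ U ⊆ M.E from diff_subset)] at hB'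
  -- B₁ : basis of U \ D ; B2 : basis of U between B₁ and B₁ ∪ D
  obtain ⟨B₁, hB₁⟩ := M.exists_isBasis (U \ D) ((diff_subset).trans hU)
  obtain ⟨B2, hB2, hB₁B2⟩ := hB₁.indep.subset_isBasis_of_subset (subset_union_left (t := D))
    (union_subset hB₁.indep.subset_ground (hD.trans hU))
  have hB2U : M.IsBasis B2 U := by
    refine hB2.indep.isBasis_of_subset_of_subset_closure
      (hB2.subset.trans (union_subset (hB₁.subset.trans diff_subset) hD)) ?_
    rw [hB2.closure_eq_closure]
    intro x hx
    by_cases hxD : x ∈ D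
    · exact M.subset_closure _ (union_subset hB₁.indep.subset_ground (hD.trans hU)) (Or.inr hxD)
    · exact M.closure_subset_closure subset_union_left (hB₁.subset_closure ⟨hx, hxD⟩)
  obtain ⟨F2, hF2fin, hF2sub, hF2ind, hF2card⟩ := lemWD hU hB hB2U hB' hfin hsub hind
  set F₁ := F2 ∩ (B₁ ∪ B') with hF₁def
  have hdiffeq : (B₁ ∪ B') \ F₁ = (B₁ ∪ B') \ F2 := by
    rw [hF₁def, diff_inter_self_eq_diff]
  have hind₁ : M.Indep ((B₁ ∪ B') \ F₁) := by
    rw [hdiffeq]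
    exact hF2ind.subset (diff_subset_diff_left (union_subset_union_left _ hB₁B2))
  have hDB' : Disjoint B' D := disjoint_sdiff_left.mono hB'.subset hD
  refine le_trans (conn_le (B₁ := B₁) (B₁' := B') ?_ ?_ (hF2fin.inter_of_left _)
    inter_subset_right ?_) ?_
  · -- (_root_.delete M D ↾ (U \ D)).IsBase B₁
    show ((M ↾ (M.E \ D)) ↾ (U \ D)).IsBase B₁
    rw [restrict_restrict_eq _ (diff_subset_diff hU (subset_refl D))]
    exact hB₁.restrict_isBase
  · -- far side
    have hgr : (_root_.delete M D).E \ (U \ D) = M.E \ U := by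
      show (M.E \ D) \ (U \ D) = M.E \ U
      ext x
      simp only [mem_diff, not_and, not_not]
      constructor
      · rintro ⟨⟨hxE, hxD⟩, h2⟩
        exact ⟨hxE, fun hxU => hxD (h2 hxU)⟩
      · rintro ⟨hxE, hxU⟩
        exact ⟨⟨hxE, fun hxD => hxU (hD hxD)⟩, fun hxU' => absurd hxU' hxU⟩
    rw [hgr]
    show ((M ↾ (M.E \ D)) ↾ (M.E \ U)).IsBase B'
    rw [restrict_restrict_eq _ (diff_subset_diff (subset_refl M.E) hD)]
    exact hB'.restrict_isBase
  · -- independence in _root_.delete M D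
    show (M ↾ (M.E \ D)).Indep ((B₁ ∪ B') \ F₁)
    rw [restrict_indep_iff]
    refine ⟨hind₁, ?_⟩
    refine (diff_subset).trans (union_subset ?_ ?_)
    · exact hB₁.subset.trans (diff_subset_diff hU (subset_refl D))
    · exact subset_diff.mpr ⟨hB'.subset.trans diff_subset, hDB'⟩
  · exact le_trans (Set.encard_le_encard inter_subset_left) hF2card

theorem conn_contract_le {U C : Set α} (hU : U ⊆ M.E) (hC : C ⊆ U) :
    conn (_root_.contract M C) (U \ C) ≤ conn M U := by
  refine le_conn fun B B' F hB hB' hfin hsub hind => ?_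
  rw [isBase_restrict_iff hU] at hB
  rw [isBase_restrict_iff (show M.E \ U ⊆ M.E from diff_subset)] at hB'
  have hCE : C ⊆ M.E := hC.trans hU
  have hdisjUc : Disjoint (M.E \ U) C := disjoint_sdiff_left.mono_right hC
  -- B_C : basis of C ; B2 : basis of U containing B_C
  obtain ⟨B_C, hBC⟩ := M.exists_isBasis C hCE
  obtain ⟨B2, hB2, hBCB2⟩ := hBC.indep.subset_isBasis_of_subset (hBC.subset.trans hC) hU
  have hB2C : B2 ∩ C = B_C :=
    (hBC.eq_of_subset_indep (hB2.indep.inter_right C)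
      (subset_inter hBCB2 hBC.subset) inter_subset_right).symm
  set B₁ := B2 \ C with hB₁def
  have hB₁BC : B₁ ∪ B_C = B2 := by rw [hB₁def, ← hB2C, diff_union_inter]
  -- apply WD
  obtain ⟨F2, hF2fin, hF2sub, hF2ind, hF2card⟩ := lemWD hU hB hB2 hB' hfin hsub hind
  -- massage : a basis V of Z containing B_C
  set G := F2 ∩ B_C with hGdef
  set Z := ((B2 ∪ B') \ F2) ∪ G with hZdef
  have hZE : Z ⊆ M.E := union_subset ((diff_subset).trans (union_subset hB2.indep.subset_ground
    hB'.indep.subset_ground)) ((inter_subset_right).trans hBC.indep.subset_ground)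
  have hBCZ : B_C ⊆ Z := by
    intro b hb
    by_cases hbF : b ∈ F2
    · exact Or.inr ⟨hbF, hb⟩
    · exact Or.inl ⟨Or.inl (hBCB2 hb), hbF⟩
  obtain ⟨V, hV, hBCV⟩ := hBC.indep.subset_isBasis_of_subset hBCZ hZE
  obtain ⟨V₀, hV₀, hV₀sub⟩ := hF2ind.subset_isBasis_of_subset (subset_union_left (t := G)) hZE
  have hZV : (Z \ V).encard ≤ G.encard := by
    rw [conullity_eq hV hV₀]
    refine Set.encard_le_encard ?_
    intro x hx
    rcases hx.1 with h | h
    · exact absurd (hV₀sub h) hx.2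
    · exact h
  set F' := (B2 ∪ B') \ V with hF'def
  have hVZsub : V ⊆ B2 ∪ B' := hV.subset.trans (union_subset diff_subset
    ((inter_subset_left).trans (hF2sub)))
  have hVeq : V = (B2 ∪ B') \ F' := by rw [hF'def, diff_diff_cancel_left hVZsub]
  have hF'card : F'.encard ≤ F2.encard := by
    have hsplit : F' ⊆ (F2 \ G) ∪ (Z \ V) := by
      intro x hx
      by_cases hxF2 : x ∈ F2
      · by_cases hxG : x ∈ G
        · exact Or.inr ⟨Or.inr hxG, hx.2⟩
        · exact Or.inl ⟨hxF2, hxG⟩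
      · exact Or.inr ⟨Or.inl ⟨hx.1, hxF2⟩, hx.2⟩
    calc F'.encard ≤ ((F2 \ G) ∪ (Z \ V)).encard := Set.encard_le_encard hsplit
      _ ≤ (F2 \ G).encard + (Z \ V).encard := Set.encard_union_le _ _
      _ ≤ (F2 \ G).encard + G.encard := by gcongr
      _ = F2.encard := Set.encard_diff_add_encard_of_subset inter_subset_left
  -- far-side basis Q of (M.E \ U) ∪ C inside B' ∪ B_C
  obtain ⟨Q, hQ0, hBCQ⟩ := hBC.indep.subset_isBasis_of_subset (subset_union_right (s := B'))
    (union_subset hB'.indep.subset_ground hBC.indep.subset_ground)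
  have hQbasis : M.IsBasis Q ((M.E \ U) ∪ C) := by
    refine hQ0.indep.isBasis_of_subset_of_subset_closure
      (hQ0.subset.trans (union_subset_union hB'.subset hBC.subset)) ?_
    rw [hQ0.closure_eq_closure]
    rintro x (hx | hx)
    · exact M.closure_subset_closure subset_union_left (hB'.subset_closure hx)
    · exact M.closure_subset_closure subset_union_right (hBC.subset_closure hx)
  have hQC : Q ∩ C = B_C :=
    (hBC.eq_of_subset_indep (hQ0.indep.inter_right C)
      (subset_inter hBCQ hBC.subset) inter_subset_right).symm
  set B₁' := Q \ C with hB₁'def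
  have hB₁'BC : B₁' ∪ B_C = Q := by rw [hB₁'def, ← hQC, diff_union_inter]
  have hB₁'B' : B₁' ⊆ B' := by
    intro x hx
    rcases hQ0.subset hx.1 with h | h
    · exact h
    · exact absurd (hBC.subset h) hx.2
  -- final data
  set F₁ := F' ∩ (B₁ ∪ B₁') with hF₁def
  have hFBC : Disjoint F' B_C := disjoint_sdiff_left.mono_right hBCV
  have hsubV : ((B₁ ∪ B₁') \ F₁) ∪ B_C ⊆ V := by
    rw [hVeq]
    refine union_subset ?_ ?_
    · rw [hF₁def, diff_inter_self_eq_diff]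
      exact diff_subset_diff_left (union_subset_union (show B₁ ⊆ B2 from diff_subset) hB₁'B')
    · rw [← hVeq]; exact hBCV
  have hF₁fin : F₁.Finite := by
    have : F'.Finite := by
      rw [hVeq] at hV
      exact Set.encard_lt_top_iff.mp (hF'card.trans_lt hF2fin.encard_lt_top)
    exact this.inter_of_left _
  have hdisjB₁C : Disjoint (B₁ ∪ B₁') C :=
    disjoint_union_left.mpr ⟨disjoint_sdiff_left, disjoint_sdiff_left⟩
  -- base of contraction on U \ C
  have hbase₁ : ((_root_.contract M C) ↾ (U \ C)).IsBase B₁ := by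
    have hb : (_root_.contract M C).IsBasis B₁ (U \ C) := by
      refine contract_basis_of hBC (diff_subset_diff_left hB2.subset) disjoint_sdiff_left ?_
      rw [hB₁BC, diff_union_of_subset hC]
      exact hB2
    exact hb.restrict_isBase
  have hbase₂ : ((_root_.contract M C) ↾ ((_root_.contract M C).E \ (U \ C))).IsBase B₁' := by
    have hgr : (_root_.contract M C).E \ (U \ C) = M.E \ U := by
      rw [contract_ground']
      ext x
      simp only [mem_diff, not_and, not_not]
      constructor
      · rintro ⟨⟨hxE, hxC⟩, h2⟩
        exact ⟨hxE, fun hxU => hxC (h2 hxU)⟩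
      · rintro ⟨hxE, hxU⟩
        exact ⟨⟨hxE, fun hxC => hxU (hC hxC)⟩, fun hxU' => absurd hxU' hxU⟩
    rw [hgr]
    have hb : (_root_.contract M C).IsBasis B₁' (M.E \ U) := by
      refine contract_basis_of hBC (hB₁'B'.trans hB'.subset) hdisjUc ?_
      rw [hB₁'BC]
      exact hQbasis
    exact hb.restrict_isBase
  have hind₁ : (_root_.contract M C).Indep ((B₁ ∪ B₁') \ F₁) :=
    contract_indep_of_union_indep hBC (hdisjB₁C.mono_left diff_subset)
      (hV.indep.subset hsubV)
  refine le_trans (conn_le hbase₁ hbase₂ hF₁fin inter_subset_right hind₁) ?_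
  calc F₁.encard ≤ F'.encard := Set.encard_le_encard inter_subset_left
    _ ≤ F2.encard := hF'card
    _ ≤ F.encard := hF2card

/-- L2 : contraction of a set outside `U`. -/

theorem conn_contract_le' {U C : Set α} (hU : U ⊆ M.E) (hCE : C ⊆ M.E)
    (hUC : Disjoint U C) : conn (_root_.contract M C) U ≤ conn M U := by
  have hUN : U ⊆ (_root_.contract M C).E := by
    rw [contract_ground']
    exact subset_diff.mpr ⟨hU, hUC⟩
  have h1 : conn (_root_.contract M C) U ≤ conn (_root_.contract M C) ((_root_.contract M C).E \ U) := by
    have := conn_swap_le (M := _root_.contract M C) (U := (_root_.contract M C).E \ U) diff_subset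
    rwa [diff_diff_cancel_left hUN] at this
  have hgr : (_root_.contract M C).E \ U = (M.E \ U) \ C := by
    rw [contract_ground', diff_diff_comm]
  have h2 : conn (_root_.contract M C) ((M.E \ U) \ C) ≤ conn M (M.E \ U) :=
    conn_contract_le diff_subset (subset_diff.mpr ⟨hCE, hUC.symm⟩)
  calc conn (_root_.contract M C) U ≤ conn (_root_.contract M C) ((_root_.contract M C).E \ U) := h1
    _ = conn (_root_.contract M C) ((M.E \ U) \ C) := by rw [hgr]
    _ ≤ conn M (M.E \ U) := h2
    _ ≤ conn M U := conn_swap_le hU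

/-- L4 : deletion of a set outside `U`. -/

theorem conn_delete_le' {U D : Set α} (hU : U ⊆ M.E) (hDE : D ⊆ M.E)
    (hUD : Disjoint U D) : conn (_root_.delete M D) U ≤ conn M U := by
  have hUN : U ⊆ (_root_.delete M D).E := subset_diff.mpr ⟨hU, hUD⟩
  have h1 : conn (_root_.delete M D) U ≤ conn (_root_.delete M D) ((_root_.delete M D).E \ U) := by
    have := conn_swap_le (M := _root_.delete M D) (U := (_root_.delete M D).E \ U) diff_subset
    rwa [diff_diff_cancel_left hUN] at this
  have hgr : (_root_.delete M D).E \ U = (M.E \ U) \ D := by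
    show (M.E \ D) \ U = _
    rw [diff_diff_comm]
  have h2 : conn (_root_.delete M D) ((M.E \ U) \ D) ≤ conn M (M.E \ U) :=
    conn_delete_le diff_subset (subset_diff.mpr ⟨hDE, hUD.symm⟩)
  calc conn (_root_.delete M D) U ≤ conn (_root_.delete M D) ((_root_.delete M D).E \ U) := h1
    _ = conn (_root_.delete M D) ((M.E \ U) \ D) := by rw [hgr]
    _ ≤ conn M (M.E \ U) := h2
    _ ≤ conn M U := conn_swap_le hU

theorem conn_minor_le {U C D : Set α} (hU : U ⊆ M.E) (hC : C ⊆ M.E) (hD : D ⊆ M.E)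
    (hCD : Disjoint C D) :
    conn (_root_.delete (_root_.contract M C) D) (U \ (C ∪ D)) ≤ conn M U := by
  have e1 : U \ (C ∩ U) = U \ C := by
    ext x; simp only [mem_diff, mem_inter_iff, not_and]; tauto
  have h1 : conn (_root_.contract M (C ∩ U)) (U \ C) ≤ conn M U := by
    have := conn_contract_le (M := M) hU (inter_subset_right (s := C) (t := U))
    rwa [e1] at this
  have h2 : conn (_root_.contract M C) (U \ C) ≤ conn (_root_.contract M (C ∩ U)) (U \ C) := by
    have hsub1 : U \ C ⊆ (_root_.contract M (C ∩ U)).E := by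
      rw [contract_ground']
      intro x hx
      exact ⟨hU hx.1, fun h => hx.2 h.1⟩
    have hsub2 : C \ U ⊆ (_root_.contract M (C ∩ U)).E := by
      rw [contract_ground']
      intro x hx
      exact ⟨hC hx.1, fun h => hx.2 h.2⟩
    have := conn_contract_le' (M := _root_.contract M (C ∩ U)) hsub1 hsub2 (disjoint_sdiff_sdiff)
    rwa [_root_.contract_contract, inter_union_diff] at this
  have h3 : conn (_root_.delete (_root_.contract M C) (D ∩ U)) (U \ (C ∪ D)) ≤ conn (_root_.contract M C) (U \ C) := by
    have hsub : D ∩ U ⊆ U \ C := fun x hx => ⟨hx.2, fun hxC => (hCD.ne_of_mem hxC hx.1) rfl⟩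
    have hUC : U \ C ⊆ (_root_.contract M C).E := by
      rw [contract_ground']
      exact diff_subset_diff_left hU
    have := conn_delete_le (M := _root_.contract M C) hUC hsub
    have e2 : (U \ C) \ (D ∩ U) = U \ (C ∪ D) := by
      ext x
      simp only [mem_diff, mem_inter_iff, mem_union, not_and, not_or]
      tauto
    rwa [e2] at this
  have h4 : conn (_root_.delete (_root_.contract M C) D) (U \ (C ∪ D)) ≤
      conn (_root_.delete (_root_.contract M C) (D ∩ U)) (U \ (C ∪ D)) := by
    have hsub1 : U \ (C ∪ D) ⊆ (_root_.delete (_root_.contract M C) (D ∩ U)).E := by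
      show U \ (C ∪ D) ⊆ (_root_.contract M C).E \ (D ∩ U)
      rw [contract_ground']
      intro x hx
      exact ⟨⟨hU hx.1, fun h => hx.2 (Or.inl h)⟩, fun h => hx.2 (Or.inr h.1)⟩
    have hsub2 : D \ U ⊆ (_root_.delete (_root_.contract M C) (D ∩ U)).E := by
      show D \ U ⊆ (_root_.contract M C).E \ (D ∩ U)
      rw [contract_ground']
      intro x hx
      exact ⟨⟨hD hx.1, fun h => (hCD.ne_of_mem h hx.1) rfl⟩, fun h => hx.2 h.2⟩
    have := conn_delete_le' (M := _root_.delete (_root_.contract M C) (D ∩ U)) hsub1 hsub2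
      (Set.disjoint_left.mpr fun x hx1 hx2 => hx2.2 hx1.1)
    rwa [_root_.delete_delete, inter_union_diff] at this
  exact h4.trans (h3.trans (h2.trans h1))

theorem stmt17 (M : Matroid α) (X Y C D : Set α)
    (hX : X ⊆ M.E) (hY : Y ⊆ M.E) (hXY : Disjoint X Y)
    (hC : C ⊆ M.E \ (X ∪ Y)) (hD : D ⊆ M.E \ (X ∪ Y)) (hCD : Disjoint C D) :
    connBtw (_root_.delete (_root_.contract M C) D) X Y ≤ connBtw M X Y := by
  unfold connBtw
  refine le_iInf₂ fun U hU => ?_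
  obtain ⟨hXU, hUE⟩ := hU
  have hCE : C ⊆ M.E := hC.trans diff_subset
  have hDE : D ⊆ M.E := hD.trans diff_subset
  have hmem : U \ (C ∪ D) ∈ {U | X ⊆ U ∧ U ⊆ (_root_.delete (_root_.contract M C) D).E \ Y} := by
    constructor
    · intro x hx
      refine ⟨hXU hx, ?_⟩
      rintro (h | h)
      · exact (hC h).2 (Or.inl hx)
      · exact (hD h).2 (Or.inl hx)
    · intro x hx
      have hx1 := hUE hx.1
      refine ⟨?_, hx1.2⟩
      show x ∈ (_root_.contract M C).E \ D
      rw [contract_ground']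
      exact ⟨⟨hx1.1, fun h => hx.2 (Or.inl h)⟩, fun h => hx.2 (Or.inr h)⟩
  refine le_trans (iInf₂_le (U \ (C ∪ D)) hmem) ?_
  exact conn_minor_le (hUE.trans diff_subset) hCE hDE hCD
end

section
/- Let X, Y be disjoint subsets of the ground set of a matroid M and X' ⊆ X, Y' ⊆ Y with κ(X', Y') = k − 1. Then κ(X, Y) ≥ k if and only if there exist x ∈ X and y ∈ Y with κ(X' + x, Y' + y) = k. -/
open Set Matroid

variable {α : Type*}

section Aux
variable {M : Matroid α} {S U V X Y I J W W' B B' F : Set α} {e x y : α} {c n : ℕ∞}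

lemma diff_split (hsub : W' ⊆ S) : S \ W = (S \ (W ∪ W')) ∪ (W' \ W) := by
  ext a
  simp only [mem_diff, mem_union, mem_diff]
  constructor
  · rintro ⟨haS, haW⟩
    by_cases h : a ∈ W' <;> tauto
  · rintro (⟨h1, h2⟩ | ⟨h1, h2⟩)
    · exact ⟨h1, fun h ↦ h2 (Or.inl h)⟩
    · exact ⟨hsub h1, h2⟩

lemma basis'_diff_encard_eq (h1 : M.IsBasis' W S) (h2 : M.IsBasis' W' S) :
    (S \ W).encard = (S \ W').encard := by
  have hb1 : (M ↾ S).IsBase W := isBase_restrict_iff'.2 h1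
  have hb2 : (M ↾ S).IsBase W' := isBase_restrict_iff'.2 h2
  have hcomm := hb1.encard_diff_comm hb2
  have eA : (S \ W).encard = (S \ (W ∪ W')).encard + (W' \ W).encard := by
    rw [diff_split h2.subset, encard_union_eq]
    exact disjoint_sdiff_left.mono_right (diff_subset.trans subset_union_right)
  have eB : (S \ W').encard = (S \ (W' ∪ W)).encard + (W \ W').encard := by
    rw [diff_split h1.subset, encard_union_eq]
    exact disjoint_sdiff_left.mono_right (diff_subset.trans subset_union_right)
  rw [eA, eB, union_comm W' W, hcomm]

/-- `del` equals the number of elements of `I ∪ J` outside any maximal independent subset. -/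
lemma del_eq_of_basis' (hW : M.IsBasis' W (I ∪ J)) : del M I J = ((I ∪ J) \ W).encard := by
  refine le_antisymm ?_ (le_sInf ?_)
  · rcases ((I ∪ J) \ W).finite_or_infinite with hfin | hinf
    · refine sInf_le ⟨(I ∪ J) \ W, hfin, diff_subset, ?_, rfl⟩
      rw [diff_diff_right_self, inter_eq_self_of_subset_right hW.subset]
      exact hW.indep
    · simp [hinf.encard_eq]
  · rintro n ⟨F, hFfin, hFss, hind, rfl⟩
    obtain ⟨W₂, hW₂, hssW₂⟩ := hind.subset_isBasis'_of_subset diff_subset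
    rw [basis'_diff_encard_eq hW hW₂]
    exact encard_mono fun a ha ↦ by_contra fun haF ↦ ha.2 (hssW₂ ⟨ha.1, haF⟩)

lemma del_le_encard (hFfin : F.Finite) (hFss : F ⊆ I ∪ J) (hind : M.Indep ((I ∪ J) \ F)) :
    del M I J ≤ F.encard :=
  sInf_le ⟨F, hFfin, hFss, hind, rfl⟩

lemma del_comm (M : Matroid α) (I J : Set α) : del M I J = del M J I := by
  rw [del, del, union_comm]

lemma conn_le_del (hB : M.IsBasis' B U) (hB' : M.IsBasis' B' (M.E \ U)) :
    conn M U ≤ del M B B' := by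
  calc conn M U ≤ ⨅ B' ∈ {B' | (M ↾ (M.E \ U)).IsBase B'}, del M B B' :=
        iInf₂_le B (isBase_restrict_iff'.2 hB)
    _ ≤ del M B B' := iInf₂_le B' (isBase_restrict_iff'.2 hB')

lemma exists_mem_eq_biInf {β : Type*} {s : Set β} (hs : s.Nonempty) (f : β → ℕ∞) :
    ∃ b ∈ s, (⨅ x ∈ s, f x) = f b := by
  have h := csInf_mem (hs.image f)
  rw [sInf_image] at h
  obtain ⟨b, hb, hfb⟩ := h
  exact ⟨b, hb, hfb.symm⟩

lemma exists_del_eq_conn (M : Matroid α) (U : Set α) :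
    ∃ B B', M.IsBasis' B U ∧ M.IsBasis' B' (M.E \ U) ∧ conn M U = del M B B' := by
  have h1 : {B | (M ↾ U).IsBase B}.Nonempty := (M ↾ U).exists_isBase
  have h2 : {B' | (M ↾ (M.E \ U)).IsBase B'}.Nonempty := (M ↾ (M.E \ U)).exists_isBase
  obtain ⟨B, hB, h₁⟩ := exists_mem_eq_biInf h1
    (fun B => ⨅ B' ∈ {B' | (M ↾ (M.E \ U)).IsBase B'}, del M B B')
  obtain ⟨B', hB', h₂⟩ := exists_mem_eq_biInf h2 (del M B)
  exact ⟨B, B', isBase_restrict_iff'.1 hB, isBase_restrict_iff'.1 hB', by rw [conn, h₁, h₂]⟩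

end Aux

section Aux2
variable {M : Matroid α} {S U V X Y X' Y' I J W W' B B' F : Set α} {e x y : α} {c n : ℕ∞}

lemma conn_ground (M : Matroid α) : conn M M.E = 0 := by
  obtain ⟨B, hB⟩ := M.exists_isBase
  obtain ⟨B', hB'⟩ := M.exists_isBasis' (M.E \ M.E)
  have hB'e : B' = ∅ := by
    have h := hB'.subset
    rw [diff_self, subset_empty_iff] at h
    exact h
  refine le_antisymm ?_ zero_le
  refine (conn_le_del (isBasis_ground_iff.2 hB).isBasis' hB').trans ?_
  have h0 : del M B B' ≤ (∅ : Set α).encard := by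
    refine del_le_encard finite_empty (empty_subset _) ?_
    rw [diff_empty, hB'e, union_empty]
    exact hB.indep
  simpa using h0

lemma conn_empty (M : Matroid α) : conn M (∅ : Set α) = 0 := by
  obtain ⟨B, hB⟩ := M.exists_isBasis' (∅ : Set α)
  obtain ⟨B', hB'⟩ := M.exists_isBasis' (M.E \ ∅)
  have hBe : B = ∅ := subset_empty_iff.1 hB.subset
  refine le_antisymm ?_ zero_le
  refine (conn_le_del hB hB').trans ?_
  have h0 : del M B B' ≤ (∅ : Set α).encard := by
    refine del_le_encard finite_empty (empty_subset _) ?_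
    rw [diff_empty, hBe, empty_union]
    exact hB'.indep
  simpa using h0

lemma conn_compl_le (hU : U ⊆ M.E) : conn M (M.E \ U) ≤ conn M U := by
  obtain ⟨B, B', h1, h2, heq⟩ := exists_del_eq_conn M U
  have h1' : M.IsBasis' B (M.E \ (M.E \ U)) := by rwa [diff_diff_cancel_left hU]
  exact (conn_le_del h2 h1').trans_eq ((del_comm M B' B).trans heq.symm)

lemma conn_compl (hU : U ⊆ M.E) : conn M (M.E \ U) = conn M U := by
  refine le_antisymm (conn_compl_le hU) ?_
  have h := conn_compl_le (U := M.E \ U) diff_subset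
  rwa [diff_diff_cancel_left hU] at h

lemma connBtw_le_conn (h1 : X ⊆ U) (h2 : U ⊆ M.E \ Y) : connBtw M X Y ≤ conn M U :=
  iInf₂_le U ⟨h1, h2⟩

lemma connBtw_mono (h1 : X ⊆ X') (h2 : Y ⊆ Y') : connBtw M X Y ≤ connBtw M X' Y' :=
  le_iInf₂ fun U hU => connBtw_le_conn (h1.trans hU.1)
    (hU.2.trans (diff_subset_diff_right h2))

lemma exists_conn_eq_connBtw (hX : X ⊆ M.E) (hdj : Disjoint X Y) :
    ∃ U, X ⊆ U ∧ U ⊆ M.E \ Y ∧ connBtw M X Y = conn M U := by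
  have hne : {U | X ⊆ U ∧ U ⊆ M.E \ Y}.Nonempty := ⟨X, subset_rfl, subset_diff.2 ⟨hX, hdj⟩⟩
  obtain ⟨U, hU, h⟩ := exists_mem_eq_biInf hne (conn M)
  exact ⟨U, hU.1, hU.2, h⟩

lemma connBtw_empty_right (hX : X ⊆ M.E) : connBtw M X ∅ = 0 := by
  refine le_antisymm ?_ zero_le
  have h : connBtw M X ∅ ≤ conn M M.E := connBtw_le_conn hX (by rw [diff_empty])
  rwa [conn_ground] at h

lemma connBtw_empty_left (Y : Set α) : connBtw M ∅ Y = 0 := by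
  refine le_antisymm ?_ zero_le
  have h : connBtw M ∅ Y ≤ conn M ∅ := connBtw_le_conn subset_rfl (empty_subset _)
  rwa [conn_empty] at h

lemma connBtw_le_symm (hX : X ⊆ M.E) : connBtw M X Y ≤ connBtw M Y X := by
  refine le_iInf₂ fun U hU => ?_
  have hUE : U ⊆ M.E := hU.2.trans diff_subset
  have h1 : X ⊆ M.E \ U := subset_diff.2 ⟨hX, (subset_diff.1 hU.2).2.symm⟩
  have h2 : M.E \ U ⊆ M.E \ Y := diff_subset_diff_right hU.1
  exact (connBtw_le_conn h1 h2).trans_eq (conn_compl hUE)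

lemma connBtw_symm (hX : X ⊆ M.E) (hY : Y ⊆ M.E) : connBtw M X Y = connBtw M Y X :=
  le_antisymm (connBtw_le_symm hX) (connBtw_le_symm hY)

end Aux2

section Aux3
variable {M : Matroid α} {S U V X Y X' Y' I J W W' B B' F : Set α} {e x y : α} {c n : ℕ∞}

lemma exists_del_witness (h : del M I J ≠ ⊤) :
    ∃ F, F.Finite ∧ F ⊆ I ∪ J ∧ M.Indep ((I ∪ J) \ F) ∧ del M I J = F.encard := by
  have hne : {n : ℕ∞ | ∃ F : Set α, F.Finite ∧ F ⊆ I ∪ J ∧ M.Indep ((I ∪ J) \ F) ∧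
      n = F.encard}.Nonempty := by
    rcases eq_empty_or_nonempty {n : ℕ∞ | ∃ F : Set α, F.Finite ∧ F ⊆ I ∪ J ∧
        M.Indep ((I ∪ J) \ F) ∧ n = F.encard} with hemp | hne
    · exfalso; apply h; rw [del, hemp, sInf_empty]
    · exact hne
  have hmem := csInf_mem hne
  obtain ⟨F, h1, h2, h3, h4⟩ := hmem
  exact ⟨F, h1, h2, h3, h4 ▸ rfl⟩

lemma compl_insert (he : e ∈ M.E) : M.E \ insert e U = (M.E \ U) \ {e} := by
  ext a; simp only [mem_diff, mem_insert_iff, mem_singleton_iff]; tauto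

lemma conn_insert_le (hU : U ⊆ M.E) (he : e ∈ M.E) :
    conn M (insert e U) ≤ conn M U + 1 := by
  by_cases heU : e ∈ U
  · rw [insert_eq_self.2 heU]; exact le_self_add
  obtain ⟨B, B', hB, hB', hconn⟩ := exists_del_eq_conn M U
  by_cases htop : del M B B' = ⊤
  · rw [hconn, htop, top_add]; exact le_top
  obtain ⟨F, hFfin, hFss, hFind, hFcard⟩ := exists_del_witness htop
  set U' := insert e U with hU'def
  have hU'E : U' ⊆ M.E := insert_subset he hU
  have hBU : M.IsBasis B U := (isBasis'_iff_isBasis hU).1 hB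
  have hB'c : M.IsBasis B' (M.E \ U) := (isBasis'_iff_isBasis diff_subset).1 hB'
  have hEU' : M.E \ U' = (M.E \ U) \ {e} := compl_insert he
  -- left-side basis
  have hleft : ∃ L, M.IsBasis L U' ∧ B ⊆ L ∧ L ⊆ insert e B := by
    by_cases hi : M.Indep (insert e B)
    · exact ⟨insert e B, hBU.insert_isBasis_insert hi, subset_insert _ _, subset_rfl⟩
    · refine ⟨B, ?_, subset_rfl, subset_insert _ _⟩
      have hecl : e ∈ M.closure B := by
        by_contra hcon
        exact hi (hBU.indep.insert_indep_iff.2 (Or.inl ⟨he, hcon⟩))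
      exact hBU.indep.isBasis_of_subset_of_subset_closure
        (hBU.subset.trans (subset_insert _ _))
        (insert_subset hecl (hBU.subset_closure))
  obtain ⟨L, hL, hBL, hLB⟩ := hleft
  by_cases heB' : e ∈ B'
  · -- e ∈ B' : build B₂, a basis of (M.E \ U) \ {e}, close to B'
    have hB''i : M.Indep (B' \ {e}) := hB'c.indep.subset diff_subset
    obtain ⟨B₂, hB₂, hB''B₂⟩ := hB''i.subset_isBasis_of_subset
      (diff_subset_diff_left hB'c.subset) (diff_subset.trans diff_subset)
    obtain ⟨B₃, hB₃, hB₂B₃⟩ := hB₂.indep.subset_isBasis_of_subset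
      (hB₂.subset.trans diff_subset) diff_subset
    have hB₃B₂ : B₃ ⊆ insert e B₂ := by
      intro z hz
      by_contra hzcon
      simp only [mem_insert_iff, not_or] at hzcon
      have hzE : z ∈ (M.E \ U) \ {e} := ⟨hB₃.subset hz, hzcon.1⟩
      have hzi : M.Indep (insert z B₂) := hB₃.indep.subset (insert_subset hz hB₂B₃)
      have := hB₂.eq_of_subset_indep hzi (subset_insert _ _)
        (insert_subset hzE hB₂.subset)
      exact hzcon.2 (this ▸ mem_insert z B₂)
    have hdiff1 : (B' \ B₃).encard ≤ 1 := by
      refine (encard_mono ?_).trans_eq (encard_singleton e)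
      intro z hz
      have h1 : z ∉ B' \ {e} := fun h => hz.2 (hB₂B₃ (hB''B₂ h))
      by_contra hze
      exact h1 ⟨hz.1, hze⟩
    have hcomm : (B' \ B₃).encard = (B₃ \ B').encard :=
      (isBase_restrict_iff'.2 hB'c.isBasis').encard_diff_comm (isBase_restrict_iff'.2 hB₃.isBasis')
    have hdiff2 : (B₃ \ B').encard ≤ 1 := hcomm ▸ hdiff1
    have hZss : B₂ \ (B' \ {e}) ⊆ B₃ \ B' := by
      rintro z ⟨hz1, hz2⟩
      refine ⟨hB₂B₃ hz1, fun hzB' => hz2 ⟨hzB', ?_⟩⟩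
      have := hB₂.subset hz1
      simpa using fun h : z = e => this.2 (h ▸ rfl)
    have hZcard : (B₂ \ (B' \ {e})).encard ≤ 1 := (encard_mono hZss).trans hdiff2
    have hZfin : (B₂ \ (B' \ {e})).Finite := by
      rw [← encard_lt_top_iff]
      exact hZcard.trans_lt (lt_top_iff_ne_top.2 (by simp))
    set Z := B₂ \ (B' \ {e}) with hZdef
    set F' := (F ∩ (L ∪ B₂)) ∪ Z with hF'def
    have hB₂U' : M.IsBasis' B₂ (M.E \ U') := by rw [hEU']; exact hB₂.isBasis'
    calc conn M U' ≤ del M L B₂ := conn_le_del hL.isBasis' hB₂U'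
      _ ≤ F'.encard := by
          refine del_le_encard ((hFfin.subset inter_subset_left).union hZfin)
            (union_subset (inter_subset_right) (diff_subset.trans subset_union_right)) ?_
          refine hFind.subset ?_
          rintro a ⟨ha1, ha2⟩
          rw [hF'def] at ha2
          have haZ : a ∉ Z := fun h => ha2 (Or.inr h)
          have haF : a ∉ F := fun h => ha2 (Or.inl ⟨h, ha1⟩)
          refine ⟨?_, haF⟩
          rcases ha1 with haL | haB₂
          · rcases hLB haL with rfl | haB
            · exact Or.inr heB'
            · exact Or.inl haB
          · have : a ∈ B' \ {e} := by_contra fun h => haZ ⟨haB₂, h⟩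
            exact Or.inr this.1
      _ ≤ F.encard + 1 := le_trans (encard_union_le _ _)
            (add_le_add (encard_mono inter_subset_left) hZcard)
      _ = conn M U + 1 := by rw [hconn, hFcard]
  · -- e ∉ B' : B' is still a basis of M.E \ U'
    have hB'U' : M.IsBasis' B' (M.E \ U') := by
      rw [hEU']
      exact (hB'c.isBasis_subset (subset_diff_singleton hB'c.subset heB') diff_subset).isBasis'
    set F' := (insert e F) ∩ (L ∪ B') with hF'def
    calc conn M U' ≤ del M L B' := conn_le_del hL.isBasis' hB'U'
      _ ≤ F'.encard := by
          refine del_le_encard ((hFfin.insert e).subset inter_subset_left) inter_subset_right ?_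
          rw [hF'def, diff_inter_self_eq_diff]
          refine hFind.subset ?_
          rintro a ⟨ha1, ha2⟩
          simp only [mem_insert_iff, not_or] at ha2
          refine ⟨?_, ha2.2⟩
          rcases ha1 with haL | haB'
          · rcases hLB haL with rfl | haB
            · exact absurd rfl ha2.1
            · exact Or.inl haB
          · exact Or.inr haB'
      _ ≤ F.encard + 1 := (encard_mono inter_subset_left).trans (encard_insert_le _ _)
      _ = conn M U + 1 := by rw [hconn, hFcard]

end Aux3

section Aux4
variable {M : Matroid α} {A S U V X Y X' Y' I J W W' B B' F : Set α} {e x y : α} {c n : ℕ∞}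

lemma conn_diff_singleton_le (hU : U ⊆ M.E) (he : e ∈ M.E) :
    conn M (U \ {e}) ≤ conn M U + 1 := by
  by_cases heU : e ∈ U
  · have h1 : U \ {e} ⊆ M.E := diff_subset.trans hU
    rw [← conn_compl h1]
    have hE : M.E \ (U \ {e}) = insert e (M.E \ U) := by
      ext a
      simp only [mem_diff, mem_insert_iff, mem_singleton_iff]
      constructor
      · rintro ⟨haE, h⟩
        by_cases hae : a = e
        · exact Or.inl hae
        · exact Or.inr ⟨haE, fun haU => h ⟨haU, hae⟩⟩
      · rintro (rfl | ⟨haE, haU⟩)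
        · exact ⟨he, fun h => h.2 rfl⟩
        · exact ⟨haE, fun h => haU h.1⟩
    rw [hE]
    calc conn M (insert e (M.E \ U)) ≤ conn M (M.E \ U) + 1 := conn_insert_le diff_subset he
      _ = conn M U + 1 := by rw [conn_compl hU]
  · rw [diff_singleton_eq_self heU]; exact le_self_add

lemma connBtw_insert_left_le (hX : X ⊆ M.E) (hdj : Disjoint X Y) (he : e ∈ M.E) (heY : e ∉ Y) :
    connBtw M (insert e X) Y ≤ connBtw M X Y + 1 := by
  obtain ⟨U, hXU, hUE, hconn⟩ := exists_conn_eq_connBtw hX hdj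
  calc connBtw M (insert e X) Y ≤ conn M (insert e U) :=
        connBtw_le_conn (insert_subset_insert hXU) (insert_subset ⟨he, heY⟩ hUE)
    _ ≤ conn M U + 1 := conn_insert_le (hUE.trans diff_subset) he
    _ = connBtw M X Y + 1 := by rw [hconn]

lemma connBtw_insert_right_le (hX : X ⊆ M.E) (hdj : Disjoint X Y) (he : e ∈ M.E) (heX : e ∉ X) :
    connBtw M X (insert e Y) ≤ connBtw M X Y + 1 := by
  obtain ⟨U, hXU, hUE, hconn⟩ := exists_conn_eq_connBtw hX hdj
  have h2 : U \ {e} ⊆ M.E \ insert e Y := by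
    rw [compl_insert he]; exact diff_subset_diff_left hUE
  calc connBtw M X (insert e Y) ≤ conn M (U \ {e}) :=
        connBtw_le_conn (subset_diff_singleton hXU heX) h2
    _ ≤ conn M U + 1 := conn_diff_singleton_le (hUE.trans diff_subset) he
    _ = connBtw M X Y + 1 := by rw [hconn]

section Rep
variable {K₁ J₁ J₂ : Set α}
variable {M : Matroid α} {S U V X Y I J W K₁ J₁ J₂ B B' B₁ B₂ B₁' B₂' F : Set α} {e x y : α}

lemma pair_spanning (hU : U ⊆ M.E) (hB : M.IsBasis B U) (hB' : M.IsBasis B' (M.E \ U)) :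
    M.E ⊆ M.closure (B ∪ B') := by
  have h1 : M.closure (B ∪ B') = M.closure (U ∪ (M.E \ U)) := by
    rw [← closure_closure_union_closure_eq_closure_union, hB.closure_eq_closure,
      hB'.closure_eq_closure, closure_closure_union_closure_eq_closure_union]
  rw [h1, union_diff_cancel hU, closure_ground]

lemma Matroid.IsBasis'.base_of_spanning (hW : M.IsBasis' W S) (hsp : M.E ⊆ M.closure S) :
    M.IsBase W :=
  hW.indep.isBase_of_ground_subset_closure (by rwa [hW.closure_eq_closure])

lemma Matroid.IsBase.basis_of_subset_of_subset (hW : M.IsBase W) (hWS : W ⊆ S) (hS : S ⊆ M.E) :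
    M.IsBasis W S :=
  hW.indep.isBasis_of_subset_of_subset_closure hWS (hS.trans (hW.closure_eq.symm.subset))

/-- Replacing `J₁ ⊆ K₁` by an independent set `J₂` with the same closure keeps a basis. -/
lemma replace_basis (hY : Y ⊆ M.E) (hK₁ : M.IsBasis K₁ Y) (hJ₁K : J₁ ⊆ K₁)
    (hJ₂ : M.Indep J₂) (hJ₂Y : J₂ ⊆ Y) (hcl : M.closure J₁ = M.closure J₂) :
    M.IsBasis (J₂ ∪ (K₁ \ J₁)) Y := by
  have hZY : K₁ \ J₁ ⊆ Y := diff_subset.trans hK₁.subset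
  have hind : M.Indep (J₂ ∪ (K₁ \ J₁)) := by
    obtain ⟨W, hW, hJ₂W⟩ := hJ₂.subset_isBasis_of_subset
      (subset_union_left (s := J₂) (t := K₁ \ J₁)) ((union_subset hJ₂Y hZY).trans hY)
    by_cases hWall : J₂ ∪ (K₁ \ J₁) ⊆ W
    · have hWeq : W = J₂ ∪ (K₁ \ J₁) := hW.subset.antisymm hWall
      rw [← hWeq]; exact hW.indep
    · exfalso
      obtain ⟨z, hzJZ, hzW⟩ := not_subset.1 hWall
      have hzZ : z ∈ K₁ \ J₁ := hzJZ.elim (fun h => absurd (hJ₂W h) hzW) id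
      have hzcl : z ∈ M.closure W := hW.subset_closure hzJZ
      have hWss : W ⊆ J₂ ∪ ((K₁ \ J₁) \ {z}) := by
        intro w hw
        rcases hW.subset hw with h | h
        · exact Or.inl h
        · exact Or.inr ⟨h, fun he => hzW (he ▸ hw)⟩
      have h2 : M.closure W ⊆ M.closure (J₁ ∪ ((K₁ \ J₁) \ {z})) := by
        refine (M.closure_subset_closure hWss).trans ?_
        rw [← closure_closure_union_closure_eq_closure_union, ← hcl,
          closure_closure_union_closure_eq_closure_union]
      have h3 : J₁ ∪ ((K₁ \ J₁) \ {z}) ⊆ K₁ \ {z} := by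
        rintro w (h | h)
        · exact ⟨hJ₁K h, fun he => hzZ.2 (he ▸ h)⟩
        · exact ⟨h.1.1, h.2⟩
      have h4 : z ∈ M.closure (K₁ \ {z}) :=
        (h2.trans (M.closure_subset_closure h3)) hzcl
      exact hK₁.indep.notMem_closure_diff_of_mem hzZ.1 h4
  refine hind.isBasis_of_subset_of_subset_closure (union_subset hJ₂Y hZY) ?_
  have h5 : M.closure (J₂ ∪ (K₁ \ J₁)) = M.closure K₁ := by
    rw [← closure_closure_union_closure_eq_closure_union, ← hcl,
      closure_closure_union_closure_eq_closure_union, union_diff_cancel hJ₁K]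
  rw [h5]
  exact hK₁.subset_closure

end Rep


section BI
variable {M : Matroid α} {S U V X Y I J W B B' B₁ B₂ B₁' B₂' F : Set α}

lemma del_eq_del_right (hU : U ⊆ M.E) (hB : M.IsBasis B U) (hB₁' : M.IsBasis B₁' (M.E \ U))
    (hB₂' : M.IsBasis B₂' (M.E \ U)) : del M B B₁' = del M B B₂' := by
  obtain ⟨W₁, hW₁, hB₁'W₁⟩ := hB₁'.indep.subset_isBasis'_of_subset (subset_union_right (s := B))
  have hdj1 : Disjoint B B₁' := (disjoint_sdiff_right (s := U) (t := M.E)).mono hB.subset hB₁'.subset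
  have hdj2 : Disjoint B B₂' := (disjoint_sdiff_right (s := U) (t := M.E)).mono hB.subset hB₂'.subset
  have hsp₁ : M.E ⊆ M.closure (B ∪ B₁') := pair_spanning hU hB hB₁'
  have hW₁base : M.IsBase W₁ := hW₁.base_of_spanning hsp₁
  have hI'B : W₁ \ B₁' ⊆ B := fun a ha => (hW₁.subset ha.1).elim id (fun h => absurd h ha.2)
  have hcl : M.closure B₁' = M.closure B₂' := by
    rw [hB₁'.closure_eq_closure, hB₂'.closure_eq_closure]
  have hW₂ : M.IsBasis (B₂' ∪ (W₁ \ B₁')) M.E :=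
    replace_basis subset_rfl (isBasis_ground_iff.2 hW₁base) hB₁'W₁ hB₂'.indep
      (hB₂'.subset.trans diff_subset) hcl
  have hW₂base : M.IsBase (B₂' ∪ (W₁ \ B₁')) := isBasis_ground_iff.1 hW₂
  have hd₁ : del M B B₁' = (B \ (W₁ \ B₁')).encard := by
    rw [del_eq_of_basis' hW₁]
    congr 1
    ext a
    constructor
    · rintro ⟨ha1, ha2⟩
      rcases ha1 with h | h
      · exact ⟨h, fun hI => ha2 hI.1⟩
      · exact absurd (hB₁'W₁ h) ha2
    · rintro ⟨ha1, ha2⟩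
      refine ⟨Or.inl ha1, fun hW => ha2 ⟨hW, fun hB1 => ?_⟩⟩
      exact hdj1.ne_of_mem ha1 hB1 rfl
  have hd₂ : del M B B₂' = (B \ (W₁ \ B₁')).encard := by
    have hW₂sub : (B₂' ∪ (W₁ \ B₁')) ⊆ B ∪ B₂' :=
      union_subset subset_union_right (hI'B.trans subset_union_left)
    have hW₂bas : M.IsBasis' (B₂' ∪ (W₁ \ B₁')) (B ∪ B₂') :=
      (hW₂base.basis_of_subset_of_subset hW₂sub
        (union_subset (hB.subset.trans hU) (hB₂'.subset.trans diff_subset))).isBasis'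
    rw [del_eq_of_basis' hW₂bas]
    congr 1
    ext a
    constructor
    · rintro ⟨ha1, ha2⟩
      rcases ha1 with h | h
      · exact ⟨h, fun hI => ha2 (Or.inr hI)⟩
      · exact absurd (Or.inl h) ha2
    · rintro ⟨ha1, ha2⟩
      refine ⟨Or.inl ha1, ?_⟩
      rintro (h | h)
      · exact hdj2.ne_of_mem ha1 h rfl
      · exact ha2 h
  rw [hd₁, hd₂]

lemma del_eq_del_left (hU : U ⊆ M.E) (hB₁ : M.IsBasis B₁ U) (hB₂ : M.IsBasis B₂ U)
    (hB' : M.IsBasis B' (M.E \ U)) : del M B₁ B' = del M B₂ B' := by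
  have hB₁' : M.IsBasis B₁ (M.E \ (M.E \ U)) := by rwa [diff_diff_cancel_left hU]
  have hB₂' : M.IsBasis B₂ (M.E \ (M.E \ U)) := by rwa [diff_diff_cancel_left hU]
  rw [del_comm M B₁ B', del_comm M B₂ B']
  exact del_eq_del_right diff_subset hB' hB₁' hB₂'

lemma conn_eq_del (hU : U ⊆ M.E) (hB : M.IsBasis B U) (hB' : M.IsBasis B' (M.E \ U)) :
    conn M U = del M B B' := by
  obtain ⟨P, P', hP, hP', heq⟩ := exists_del_eq_conn M U
  have hPb : M.IsBasis P U := (isBasis'_iff_isBasis hU).1 hP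
  have hP'b : M.IsBasis P' (M.E \ U) := (isBasis'_iff_isBasis diff_subset).1 hP'
  calc conn M U = del M P P' := heq
    _ = del M P B' := del_eq_del_right hU hPb hP'b hB'
    _ = del M B B' := del_eq_del_left hU hPb hB hB'

end BI

lemma conn_submod (hU : U ⊆ M.E) (hV : V ⊆ M.E) :
    conn M (U ∪ V) + conn M (U ∩ V) ≤ conn M U + conn M V := by
  classical
  obtain ⟨K, hK⟩ := M.exists_isBasis (U ∩ V) ((inter_subset_left).trans hU)
  obtain ⟨BU, hBU, hKBU⟩ := hK.indep.subset_isBasis_of_subset (hK.subset.trans inter_subset_left) hU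
  obtain ⟨BV, hBV, hKBV⟩ := hK.indep.subset_isBasis_of_subset (hK.subset.trans inter_subset_right) hV
  obtain ⟨K', hK'⟩ := M.exists_isBasis (M.E \ (U ∪ V)) diff_subset
  obtain ⟨CU, hCU, hK'CU⟩ := hK'.indep.subset_isBasis_of_subset
    (hK'.subset.trans (diff_subset_diff_right subset_union_left)) diff_subset
  obtain ⟨CV, hCV, hK'CV⟩ := hK'.indep.subset_isBasis_of_subset
    (hK'.subset.trans (diff_subset_diff_right subset_union_right)) diff_subset
  have hBUE : BU ⊆ M.E := hBU.indep.subset_ground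
  have hBVE : BV ⊆ M.E := hBV.indep.subset_ground
  have hCUE : CU ⊆ M.E := hCU.indep.subset_ground
  have hCVE : CV ⊆ M.E := hCV.indep.subset_ground
  have hK'E : K' ⊆ M.E := hK'.indep.subset_ground
  have hKE : K ⊆ M.E := hK.indep.subset_ground
  obtain ⟨Q₁, hQ₁, hBUQ₁⟩ := hBU.indep.subset_isBasis_of_subset
    (subset_union_left (s := BU) (t := K')) (union_subset hBUE hK'E)
  obtain ⟨Q₂, hQ₂, hCVQ₂⟩ := hCV.indep.subset_isBasis_of_subset
    (subset_union_left (s := CV) (t := K)) (union_subset hCVE hKE)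
  have hQ₁SU : Q₁ ⊆ BU ∪ CU := hQ₁.subset.trans (union_subset_union_right _ hK'CU)
  obtain ⟨TU, hTU, hQ₁TU⟩ := hQ₁.indep.subset_isBasis_of_subset hQ₁SU (union_subset hBUE hCUE)
  have hQ₂SV : Q₂ ⊆ BV ∪ CV := hQ₂.subset.trans (by
      rw [union_comm BV CV]; exact union_subset_union_right _ hKBV)
  obtain ⟨TV, hTV, hQ₂TV⟩ := hQ₂.indep.subset_isBasis_of_subset hQ₂SV (union_subset hBVE hCVE)
  -- closure equality
  have hsetEq : U ∪ (M.E \ (U ∪ V)) = (M.E \ V) ∪ (U ∩ V) := by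
    ext a
    constructor
    · rintro (h | h)
      · by_cases hv : a ∈ V
        · exact Or.inr ⟨h, hv⟩
        · exact Or.inl ⟨hU h, hv⟩
      · exact Or.inl ⟨h.1, fun hv => h.2 (Or.inr hv)⟩
    · rintro (h | h)
      · by_cases hu : a ∈ U
        · exact Or.inl hu
        · exact Or.inr ⟨h.1, fun hx => hx.elim hu h.2⟩
      · exact Or.inl h.1
  have hclQ₁ : M.closure Q₁ = M.closure (U ∪ (M.E \ (U ∪ V))) := by
    rw [hQ₁.closure_eq_closure, ← closure_closure_union_closure_eq_closure_union,
      hBU.closure_eq_closure, hK'.closure_eq_closure,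
      closure_closure_union_closure_eq_closure_union]
  have hclQ₂ : M.closure Q₂ = M.closure ((M.E \ V) ∪ (U ∩ V)) := by
    rw [hQ₂.closure_eq_closure, ← closure_closure_union_closure_eq_closure_union,
      hCV.closure_eq_closure, hK.closure_eq_closure,
      closure_closure_union_closure_eq_closure_union]
  have hclQ : M.closure Q₁ = M.closure Q₂ := by rw [hclQ₁, hclQ₂, hsetEq]
  -- big bases are bases of M
  have hTUbase : M.IsBase TU := hTU.isBasis'.base_of_spanning (pair_spanning hU hBU hCU)
  have hTVbase : M.IsBase TV := hTV.isBasis'.base_of_spanning (pair_spanning hV hBV hCV)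
  -- replacements
  have hWD : M.IsBasis (Q₁ ∪ (TV \ Q₂)) M.E :=
    replace_basis subset_rfl (isBasis_ground_iff.2 hTVbase) hQ₂TV hQ₁.indep
      hQ₁.indep.subset_ground hclQ.symm
  have hWA : M.IsBasis (Q₂ ∪ (TU \ Q₁)) M.E :=
    replace_basis subset_rfl (isBasis_ground_iff.2 hTUbase) hQ₁TU hQ₂.indep
      hQ₂.indep.subset_ground hclQ
  set IK := Q₁ \ BU with hIKdef
  set JK := Q₂ \ CV with hJKdef
  set I₂ := TU \ Q₁ with hI₂def
  set J₂ := TV \ Q₂ with hJ₂def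
  have hIKK' : IK ⊆ K' := fun a ha => ((hQ₁.subset ha.1).elim (fun h => absurd h ha.2) id)
  have hJKK : JK ⊆ K := fun a ha => ((hQ₂.subset ha.1).elim (fun h => absurd h ha.2) id)
  have hI₂CU : I₂ ⊆ CU \ K' := by
    rintro a ⟨haTU, haQ₁⟩
    have haSU : a ∈ BU ∪ CU := hTU.subset haTU
    have haBU : a ∉ BU := fun h => haQ₁ (hBUQ₁ h)
    refine ⟨haSU.resolve_left haBU, fun haK' => haQ₁ ?_⟩
    exact hQ₁.mem_of_insert_indep (Or.inr haK') (hTU.indep.subset (insert_subset haTU hQ₁TU))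
  have hJ₂BV : J₂ ⊆ BV \ K := by
    rintro a ⟨haTV, haQ₂⟩
    have haSV : a ∈ BV ∪ CV := hTV.subset haTV
    have haCV : a ∉ CV := fun h => haQ₂ (hCVQ₂ h)
    refine ⟨haSV.resolve_right haCV, fun haK => haQ₂ ?_⟩
    exact hQ₂.mem_of_insert_indep (Or.inr haK) (hTV.indep.subset (insert_subset haTV hQ₂TV))
  have hdjU : Disjoint BU CU :=
    (disjoint_sdiff_right (s := U) (t := M.E)).mono hBU.subset hCU.subset
  have hdjV : Disjoint BV CV :=
    (disjoint_sdiff_right (s := V) (t := M.E)).mono hBV.subset hCV.subset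
  -- membership decompositions of TU, TV
  have hBUTU : BU ⊆ TU := hBUQ₁.trans hQ₁TU
  have hIKTU : IK ⊆ TU := (diff_subset (s := Q₁)).trans hQ₁TU
  have hCVTV : CV ⊆ TV := hCVQ₂.trans hQ₂TV
  have hJKTV : JK ⊆ TV := (diff_subset (s := Q₂)).trans hQ₂TV
  have hTUsub : ∀ a ∈ TU, a ∈ BU ∨ a ∈ IK ∨ a ∈ I₂ := by
    intro a ha
    by_cases h1 : a ∈ Q₁
    · by_cases h2 : a ∈ BU
      · exact Or.inl h2
      · exact Or.inr (Or.inl ⟨h1, h2⟩)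
    · exact Or.inr (Or.inr ⟨ha, h1⟩)
  have hTVsub : ∀ a ∈ TV, a ∈ CV ∨ a ∈ JK ∨ a ∈ J₂ := by
    intro a ha
    by_cases h1 : a ∈ Q₂
    · by_cases h2 : a ∈ CV
      · exact Or.inl h2
      · exact Or.inr (Or.inl ⟨h1, h2⟩)
    · exact Or.inr (Or.inr ⟨ha, h1⟩)
  -- decomposition of conn U
  have hidU : (BU ∪ CU) \ TU = (K' \ IK) ∪ ((CU \ K') \ I₂) := by
    ext a
    constructor
    · rintro ⟨ha1, ha2⟩
      have haBU : a ∉ BU := fun h => ha2 (hBUTU h)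
      have haCU : a ∈ CU := ha1.resolve_left haBU
      by_cases haK' : a ∈ K'
      · exact Or.inl ⟨haK', fun h => ha2 (hIKTU h)⟩
      · exact Or.inr ⟨⟨haCU, haK'⟩, fun h => ha2 (diff_subset h)⟩
    · rintro (⟨haK', haIK⟩ | ⟨⟨haCU, haK'⟩, haI₂⟩)
      · refine ⟨Or.inr (hK'CU haK'), fun h => ?_⟩
        rcases hTUsub a h with h | h | h
        · exact disjoint_left.1 hdjU h (hK'CU haK')
        · exact haIK h
        · exact (hI₂CU h).2 haK'
      · refine ⟨Or.inr haCU, fun h => ?_⟩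
        rcases hTUsub a h with h | h | h
        · exact disjoint_left.1 hdjU h haCU
        · exact haK' (hIKK' h)
        · exact haI₂ h
  have hdisjU2 : Disjoint (K' \ IK) ((CU \ K') \ I₂) :=
    ((disjoint_sdiff_right (s := K') (t := CU)).mono diff_subset diff_subset)
  have hconnU : conn M U = (K' \ IK).encard + ((CU \ K') \ I₂).encard := by
    rw [conn_eq_del hU hBU hCU, del_eq_of_basis' hTU.isBasis', hidU, encard_union_eq hdisjU2]
  -- decomposition of conn V
  have hidV : (BV ∪ CV) \ TV = (K \ JK) ∪ ((BV \ K) \ J₂) := by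
    ext a
    constructor
    · rintro ⟨ha1, ha2⟩
      have haCV : a ∉ CV := fun h => ha2 (hCVTV h)
      have haBV : a ∈ BV := ha1.resolve_right haCV
      by_cases haK : a ∈ K
      · exact Or.inl ⟨haK, fun h => ha2 (hJKTV h)⟩
      · exact Or.inr ⟨⟨haBV, haK⟩, fun h => ha2 (diff_subset h)⟩
    · rintro (⟨haK, haJK⟩ | ⟨⟨haBV, haK⟩, haJ₂⟩)
      · refine ⟨Or.inl (hKBV haK), fun h => ?_⟩
        rcases hTVsub a h with h | h | h
        · exact disjoint_right.1 hdjV h (hKBV haK)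
        · exact haJK h
        · exact (hJ₂BV h).2 haK
      · refine ⟨Or.inl haBV, fun h => ?_⟩
        rcases hTVsub a h with h | h | h
        · exact disjoint_right.1 hdjV h haBV
        · exact haK (hJKK h)
        · exact haJ₂ h
  have hdisjV2 : Disjoint (K \ JK) ((BV \ K) \ J₂) :=
    ((disjoint_sdiff_right (s := K) (t := BV)).mono diff_subset diff_subset)
  have hconnV : conn M V = (K \ JK).encard + ((BV \ K) \ J₂).encard := by
    rw [conn_eq_del hV hBV hCV, del_eq_of_basis' hTV.isBasis', hidV, encard_union_eq hdisjV2]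
  -- the union side
  have hBUJ₂i : M.Indep (BU ∪ J₂) :=
    hWD.indep.subset (union_subset (hBUQ₁.trans subset_union_left) subset_union_right)
  have hBUJ₂ss : BU ∪ J₂ ⊆ BU ∪ BV :=
    union_subset subset_union_left ((hJ₂BV.trans diff_subset).trans subset_union_right)
  obtain ⟨BD, hBD, hBDsup⟩ := hBUJ₂i.subset_isBasis_of_subset hBUJ₂ss (union_subset hBUE hBVE)
  have hBD_D : M.IsBasis BD (U ∪ V) := by
    refine hBD.indep.isBasis_of_subset_of_subset_closure
      (hBD.subset.trans (union_subset_union hBU.subset hBV.subset)) ?_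
    rw [hBD.closure_eq_closure, ← closure_closure_union_closure_eq_closure_union,
      hBU.closure_eq_closure, hBV.closure_eq_closure,
      closure_closure_union_closure_eq_closure_union]
    exact M.subset_closure _ (union_subset hU hV)
  have hWDss : Q₁ ∪ J₂ ⊆ BD ∪ K' := by
    refine union_subset (fun a ha => ?_) (fun a ha => Or.inl (hBDsup (Or.inr ha)))
    by_cases h : a ∈ BU
    · exact Or.inl (hBDsup (Or.inl h))
    · exact Or.inr (hIKK' ⟨ha, h⟩)
  have hWDbas : M.IsBasis' (Q₁ ∪ J₂) (BD ∪ K') :=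
    ((isBasis_ground_iff.1 hWD).basis_of_subset_of_subset hWDss
      (union_subset hBD.indep.subset_ground hK'E)).isBasis'
  have hconnD : conn M (U ∪ V) ≤ ((BV \ K) \ J₂).encard + (K' \ IK).encard := by
    refine (conn_le_del hBD_D.isBasis' hK'.isBasis').trans ?_
    rw [del_eq_of_basis' hWDbas]
    refine le_trans (encard_mono ?_) (encard_union_le _ _)
    rintro a ⟨ha1, ha2⟩
    rcases ha1 with haBD | haK'
    · left
      have haBU : a ∉ BU := fun h => ha2 (Or.inl (hBUQ₁ h))
      have haBV : a ∈ BV := (hBD.subset haBD).resolve_left haBU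
      refine ⟨⟨haBV, fun haK => haBU (hKBU haK)⟩, fun h => ha2 (Or.inr h)⟩
    · right
      exact ⟨haK', fun h => ha2 (Or.inl ((diff_subset (s := Q₁)) h))⟩
  -- the intersection side
  have hCVI₂i : M.Indep (CV ∪ I₂) :=
    hWA.indep.subset (union_subset (hCVQ₂.trans subset_union_left) subset_union_right)
  have hCVI₂ss : CV ∪ I₂ ⊆ CU ∪ CV :=
    union_subset subset_union_right ((hI₂CU.trans diff_subset).trans subset_union_left)
  obtain ⟨CA, hCA, hCAsup⟩ := hCVI₂i.subset_isBasis_of_subset hCVI₂ss (union_subset hCUE hCVE)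
  have hCA_A : M.IsBasis CA (M.E \ (U ∩ V)) := by
    refine hCA.indep.isBasis_of_subset_of_subset_closure (hCA.subset.trans ?_) ?_
    · rw [diff_inter]
      exact union_subset_union hCU.subset hCV.subset
    · rw [hCA.closure_eq_closure, ← closure_closure_union_closure_eq_closure_union,
        hCU.closure_eq_closure, hCV.closure_eq_closure,
        closure_closure_union_closure_eq_closure_union, ← diff_inter]
      exact M.subset_closure _ diff_subset
  have hWAss : Q₂ ∪ I₂ ⊆ K ∪ CA := by
    refine union_subset (fun a ha => ?_) (fun a ha => Or.inr (hCAsup (Or.inr ha)))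
    by_cases h : a ∈ CV
    · exact Or.inr (hCAsup (Or.inl h))
    · exact Or.inl (hJKK ⟨ha, h⟩)
  have hWAbas : M.IsBasis' (Q₂ ∪ I₂) (K ∪ CA) :=
    ((isBasis_ground_iff.1 hWA).basis_of_subset_of_subset hWAss
      (union_subset hKE hCA.indep.subset_ground)).isBasis'
  have hconnA : conn M (U ∩ V) ≤ (K \ JK).encard + ((CU \ K') \ I₂).encard := by
    refine (conn_le_del hK.isBasis' hCA_A.isBasis').trans ?_
    rw [del_eq_of_basis' hWAbas]
    refine le_trans (encard_mono ?_) (encard_union_le _ _)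
    rintro a ⟨ha1, ha2⟩
    rcases ha1 with haK | haCA
    · left
      exact ⟨haK, fun h => ha2 (Or.inl ((diff_subset (s := Q₂)) h))⟩
    · right
      have haCV : a ∉ CV := fun h => ha2 (Or.inl (hCVQ₂ h))
      have haCU : a ∈ CU := (hCA.subset haCA).resolve_right haCV
      refine ⟨⟨haCU, fun haK' => haCV (hK'CV haK')⟩, fun h => ha2 (Or.inr h)⟩
  -- combine
  calc conn M (U ∪ V) + conn M (U ∩ V)
      ≤ (((BV \ K) \ J₂).encard + (K' \ IK).encard) +
        ((K \ JK).encard + ((CU \ K') \ I₂).encard) := add_le_add hconnD hconnA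
    _ = ((K' \ IK).encard + ((CU \ K') \ I₂).encard) +
        ((K \ JK).encard + ((BV \ K) \ J₂).encard) := by ring
    _ = conn M U + conn M V := by rw [hconnU, hconnV]

lemma chain_cover {𝒞 : Set (Set α)} {X₀ : Set α} (hne : 𝒞.Nonempty)
    (hch : IsChain (· ⊆ ·) 𝒞) (hfin : X₀.Finite) :
    X₀ ⊆ ⋃₀ 𝒞 → ∃ W ∈ 𝒞, X₀ ⊆ W := by
  classical
  obtain ⟨s, rfl⟩ := hfin.exists_finset_coe
  clear hfin
  induction s using Finset.induction_on with
  | empty => exact fun _ => hne.imp (fun W hW => ⟨hW, by simp⟩)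
  | @insert x s hx ih =>
      intro hsub
      rw [Finset.coe_insert, insert_subset_iff] at hsub
      obtain ⟨W₁, hW₁, hsub₁⟩ := ih hsub.2
      obtain ⟨W₂, hW₂mem, hxW₂⟩ := hsub.1
      rcases hch.total hW₁ hW₂mem with h | h
      · exact ⟨W₂, hW₂mem, by rw [Finset.coe_insert]; exact insert_subset hxW₂ (hsub₁.trans h)⟩
      · exact ⟨W₁, hW₁, by rw [Finset.coe_insert]; exact insert_subset (h hxW₂) hsub₁⟩

lemma enat_not_succ_le_self' {a : ℕ∞} (ha : a ≠ ⊤) : ¬ (a + 1 ≤ a) :=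
  fun h => lt_irrefl a ((ENat.add_one_le_iff ha).1 h)

lemma conn_chain (c : ℕ∞) (hctop : c ≠ ⊤) {𝒞 : Set (Set α)} (hne : 𝒞.Nonempty)
    (hch : IsChain (· ⊆ ·) 𝒞) (hE : ∀ W ∈ 𝒞, W ⊆ M.E)
    (hc : ∀ W ∈ 𝒞, conn M W ≤ c) : conn M (⋃₀ 𝒞) ≤ c := by
  by_contra hcon
  set U := ⋃₀ 𝒞 with hUdef
  have hUE : U ⊆ M.E := sUnion_subset hE
  obtain ⟨B, hB⟩ := M.exists_isBasis U hUE
  obtain ⟨B', hB'⟩ := M.exists_isBasis (M.E \ U) diff_subset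
  have hdjBB' : Disjoint B B' :=
    (disjoint_sdiff_right (s := U) (t := M.E)).mono hB.subset hB'.subset
  -- a basis of B ∪ B' containing B'
  obtain ⟨T, hT, hB'T⟩ := hB'.indep.subset_isBasis'_of_subset (subset_union_right (s := B))
  have hTbase : M.IsBase T := hT.base_of_spanning (pair_spanning hUE hB hB')
  -- conn U = (B \ T).encard
  have hconnU : conn M U = (B \ T).encard := by
    rw [conn_eq_del hUE hB hB', del_eq_of_basis' hT]
    congr 1
    ext a
    constructor
    · rintro ⟨ha1, ha2⟩
      exact ⟨ha1.resolve_right (fun h => ha2 (hB'T h)), ha2⟩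
    · rintro ⟨ha1, ha2⟩
      exact ⟨Or.inl ha1, ha2⟩
  have hle : c + 1 ≤ (B \ T).encard := by
    rw [← hconnU]
    exact (ENat.add_one_le_iff hctop).2 (lt_of_not_ge hcon)
  obtain ⟨X₀, hX₀sub, hX₀card⟩ := Set.exists_subset_encard_eq hle
  have hc1top : c + 1 ≠ ⊤ := by
    intro h
    rw [show c + 1 = ⊤ ↔ c = ⊤ ∨ (1 : ℕ∞) = ⊤ from WithTop.add_eq_top] at h
    exact hctop (h.elim id (fun h => absurd h (by simp)))
  have hX₀fin : X₀.Finite := by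
    rw [← encard_lt_top_iff, hX₀card]
    exact lt_top_iff_ne_top.2 hc1top
  -- find a member of the chain containing X₀
  obtain ⟨W, hW𝒞, hX₀W⟩ := chain_cover hne hch hX₀fin
    (hX₀sub.trans ((diff_subset.trans hB.subset)))
  have hWE : W ⊆ M.E := hE W hW𝒞
  have hWU : W ⊆ U := subset_sUnion_of_mem hW𝒞
  -- bases for W adapted to the situation
  have hBWind : M.Indep (B ∩ W) := hB.indep.subset inter_subset_left
  obtain ⟨BW, hBW, hBWsup⟩ := hBWind.subset_isBasis_of_subset inter_subset_right hWE
  have hQind : M.Indep (B' ∪ ((T ∩ B) \ W)) :=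
    hT.indep.subset (union_subset hB'T (fun a ha => ha.1.1))
  have hQsub : B' ∪ ((T ∩ B) \ W) ⊆ M.E \ W := by
    refine union_subset (hB'.subset.trans (diff_subset_diff_right hWU)) ?_
    rintro a ⟨⟨haT, haB⟩, haW⟩
    exact ⟨hB.indep.subset_ground haB, haW⟩
  obtain ⟨BW', hBW', hBW'sup⟩ := hQind.subset_isBasis_of_subset hQsub diff_subset
  -- the test set R
  set R := (B' ∪ (T ∩ B)) ∪ X₀ with hRdef
  have hTeq : T = B' ∪ (T ∩ B) := by
    ext a
    constructor
    · intro ha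
      rcases hT.subset ha with h | h
      · exact Or.inr ⟨ha, h⟩
      · exact Or.inl h
    · rintro (h | h)
      · exact hB'T h
      · exact h.1
  have hRE : R ⊆ M.E := by
    refine union_subset (union_subset hB'.indep.subset_ground
      (fun a ha => hB.indep.subset_ground ha.2)) ?_
    exact hX₀sub.trans (diff_subset.trans hB.indep.subset_ground)
  have hTR : M.IsBasis' T R := by
    refine ((hTbase.basis_of_subset_of_subset ?_ hRE)).isBasis'
    conv_lhs => rw [hTeq]
    exact subset_union_left
  have hRT : R \ T = X₀ := by
    ext a
    constructor
    · rintro ⟨ha1, ha2⟩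
      rcases ha1 with (h | h) | h
      · exact absurd (hB'T h) ha2
      · exact absurd h.1 ha2
      · exact h
    · intro ha
      exact ⟨Or.inr ha, (hX₀sub ha).2⟩
  have hSW : R ⊆ BW ∪ BW' := by
    rintro a ((h | h) | h)
    · exact Or.inr (hBW'sup (Or.inl h))
    · by_cases hw : a ∈ W
      · exact Or.inl (hBWsup ⟨h.2, hw⟩)
      · exact Or.inr (hBW'sup (Or.inr ⟨h, hw⟩))
    · exact Or.inl (hBWsup ⟨(hX₀sub h).1, hX₀W h⟩)
  have hdel : del M BW BW' ≤ c := by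
    rw [← conn_eq_del hWE hBW hBW']
    exact hc W hW𝒞
  obtain ⟨F, hFfin, hFsub, hFind, hFcard⟩ :=
    exists_del_witness (fun h => hctop (top_le_iff.1 (h ▸ hdel)))
  have hRF : M.Indep (R \ F) := hFind.subset (fun a ha => ⟨hSW ha.1, ha.2⟩)
  obtain ⟨T', hT', hsubT'⟩ := hRF.subset_isBasis'_of_subset (diff_subset (s := R))
  have hcard2 : (R \ T').encard = (c + 1 : ℕ∞) := by
    rw [basis'_diff_encard_eq hT' hTR, hRT, hX₀card]
  have hfinal : (c + 1 : ℕ∞) ≤ c := by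
    rw [← hcard2]
    refine le_trans (encard_mono ?_) (le_of_eq_of_le hFcard.symm hdel)
    rintro a ⟨ha1, ha2⟩
    by_contra haF
    exact ha2 (hsubT' ⟨ha1, haF⟩)
  exact enat_not_succ_le_self' hctop hfinal

lemma lemma_S (hAX : A ⊆ X) (hX : X ⊆ M.E) (hdj : Disjoint X B) (hBE : B ⊆ M.E)
    (hc : c ≠ ⊤) (hbase : connBtw M A B = c)
    (hstep : ∀ x ∈ X, connBtw M (insert x A) B ≤ c) :
    connBtw M X B ≤ c := by
  set 𝒰 := {U | A ⊆ U ∧ U ⊆ M.E \ B ∧ conn M U ≤ c} with h𝒰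
  have hAE : A ⊆ M.E := hAX.trans hX
  have hdjAB : Disjoint A B := hdj.mono_left hAX
  obtain ⟨U₀, hAU₀, hU₀, hU₀c⟩ := exists_conn_eq_connBtw hAE hdjAB
  have hU₀𝒰 : U₀ ∈ 𝒰 := ⟨hAU₀, hU₀, by rw [← hU₀c, hbase]⟩
  have hzorn : ∃ m, U₀ ⊆ m ∧ Maximal (· ∈ 𝒰) m := by
    refine zorn_subset_nonempty 𝒰 ?_ U₀ hU₀𝒰
    intro 𝒞 h𝒞sub hch hne
    refine ⟨⋃₀ 𝒞, ⟨?_, ?_, ?_⟩, fun s hs => subset_sUnion_of_mem hs⟩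
    · obtain ⟨W, hW⟩ := hne; exact (h𝒞sub hW).1.trans (subset_sUnion_of_mem hW)
    · exact sUnion_subset fun W hW => (h𝒞sub hW).2.1
    · exact conn_chain c hc hne hch (fun W hW => (h𝒞sub hW).2.1.trans diff_subset)
        (fun W hW => (h𝒞sub hW).2.2)
  obtain ⟨m, hU₀m, hm⟩ := hzorn
  have hXm : X ⊆ m := by
    intro x hxX
    by_contra hxm
    have h1 : insert x A ⊆ M.E := insert_subset (hX hxX) hAE
    have hdj1 : Disjoint (insert x A) B := hdj.mono_left (insert_subset hxX hAX)
    obtain ⟨V, hXV, hVE, hVc⟩ := exists_conn_eq_connBtw h1 hdj1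
    have hVc' : conn M V ≤ c := le_of_eq_of_le hVc.symm (hstep x hxX)
    have hsubmod := conn_submod (hm.1.2.1.trans diff_subset) (hVE.trans diff_subset)
    have hlow : c ≤ conn M (m ∩ V) := by
      rw [← hbase]
      exact connBtw_le_conn (subset_inter hm.1.1 ((subset_insert _ _).trans hXV))
        ((inter_subset_left).trans hm.1.2.1)
    have hup : conn M (m ∪ V) ≤ c := by
      have h2 : conn M (m ∪ V) + c ≤ c + c :=
        le_trans (add_le_add_right hlow _) (hsubmod.trans (add_le_add hm.1.2.2 hVc'))
      exact (WithTop.add_le_add_iff_right hc).1 h2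
    have hmV𝒰 : m ∪ V ∈ 𝒰 :=
      ⟨hm.1.1.trans subset_union_left, union_subset hm.1.2.1 hVE, hup⟩
    have hsub := hm.2 hmV𝒰 subset_union_left
    exact hxm (hsub (Or.inr (hXV (mem_insert x A))))
  exact (connBtw_le_conn hXm hm.1.2.1).trans hm.1.2.2

lemma enat_dichotomy {a v : ℕ∞} (ha : a ≠ ⊤) (h1 : a ≤ v) (h2 : v ≤ a + 1) :
    v = a ∨ v = a + 1 := by
  rcases eq_or_lt_of_le h1 with h | h
  · exact Or.inl h.symm
  · exact Or.inr (le_antisymm h2 ((ENat.add_one_le_iff ha).2 h))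

lemma enat_not_succ_le_self {a : ℕ∞} (ha : a ≠ ⊤) : ¬ (a + 1 ≤ a) :=
  fun h => lt_irrefl a ((ENat.add_one_le_iff ha).1 h)

end Aux4

theorem stmt18 (M : Matroid α) (X Y X' Y' : Set α) (k : ℕ) (hk : 1 ≤ k)
    (hX : X ⊆ M.E) (hY : Y ⊆ M.E) (hXY : Disjoint X Y)
    (hX' : X' ⊆ X) (hY' : Y' ⊆ Y)
    (hprev : connBtw M X' Y' = ((k - 1 : ℕ) : ℕ∞)) :
    ((k : ℕ∞) ≤ connBtw M X Y ↔
      ∃ x ∈ X, ∃ y ∈ Y, connBtw M (insert x X') (insert y Y') = (k : ℕ∞)) := by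
  set c : ℕ∞ := ((k - 1 : ℕ) : ℕ∞) with hcdef
  have hc_ne : c ≠ ⊤ := by simp [hcdef]
  have hkc : (k : ℕ∞) = c + 1 := by
    rw [hcdef]
    norm_cast
    omega
  have hX'E : X' ⊆ M.E := hX'.trans hX
  have hY'E : Y' ⊆ M.E := hY'.trans hY
  have hdjX'Y' : Disjoint X' Y' := hXY.mono hX' hY'
  constructor
  · -- hard direction
    intro hκ
    rw [hkc] at hκ
    -- branch 1 : does some x ∈ X give value c+1 on the left?
    by_cases hbr1 : ∃ x ∈ X, connBtw M (insert x X') Y' = c + 1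
    · obtain ⟨x₀, hx₀X, hx₀⟩ := hbr1
      have hY'ne : Y'.Nonempty := by
        rcases eq_empty_or_nonempty Y' with rfl | h
        · rw [connBtw_empty_right (insert_subset (hX hx₀X) hX'E)] at hx₀
          exact absurd hx₀.symm (by simp [hcdef])
        · exact h
      obtain ⟨y₀, hy₀⟩ := hY'ne
      refine ⟨x₀, hx₀X, y₀, hY' hy₀, ?_⟩
      rw [insert_eq_self.2 hy₀, hx₀, hkc]
    · push_neg at hbr1
      have hallx : ∀ x ∈ X, connBtw M (insert x X') Y' ≤ c := by
        intro x hxX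
        have hlo : c ≤ connBtw M (insert x X') Y' := by
          rw [← hprev]; exact connBtw_mono (subset_insert _ _) subset_rfl
        have hhi : connBtw M (insert x X') Y' ≤ c + 1 := by
          have := connBtw_insert_left_le hX'E hdjX'Y' (hX hxX)
            (disjoint_left.1 (hXY.mono_right hY') hxX)
          rwa [hprev] at this
        rcases enat_dichotomy hc_ne hlo hhi with h | h
        · exact le_of_eq h
        · exact absurd h (hbr1 x hxX)
      have hXY'c : connBtw M X Y' = c := by
        refine le_antisymm (lemma_S hX' hX (hXY.mono_right hY') hY'E hc_ne hprev hallx) ?_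
        rw [← hprev]; exact connBtw_mono hX' subset_rfl
      -- branch 2 : some y ∈ Y with value c+1 on top of X?
      by_cases hbr2 : ∃ y ∈ Y, connBtw M X (insert y Y') = c + 1
      · obtain ⟨y₀, hy₀Y, hy₀⟩ := hbr2
        have hdjXY'y : Disjoint X (insert y₀ Y') := hXY.mono_right (insert_subset hy₀Y hY')
        have hvlo : c ≤ connBtw M X' (insert y₀ Y') := by
          rw [← hprev]; exact connBtw_mono subset_rfl (subset_insert _ _)
        have hvhi : connBtw M X' (insert y₀ Y') ≤ c + 1 := by
          have := connBtw_insert_right_le hX'E hdjX'Y' (hY hy₀Y)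
            (disjoint_right.1 (hXY.mono_left hX') hy₀Y)
          rwa [hprev] at this
        rcases enat_dichotomy hc_ne hvlo hvhi with hv | hv
        · -- value c : find x₀ ∈ X with the jump
          by_cases hex : ∀ x ∈ X, connBtw M (insert x X') (insert y₀ Y') ≤ c
          · exfalso
            have := lemma_S hX' hX hdjXY'y (insert_subset (hY hy₀Y) hY'E) hc_ne hv hex
            rw [hy₀] at this
            exact enat_not_succ_le_self hc_ne this
          · push_neg at hex
            obtain ⟨x₀, hx₀X, hx₀⟩ := hex
            have hlo : c + 1 ≤ connBtw M (insert x₀ X') (insert y₀ Y') :=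
              (ENat.add_one_le_iff hc_ne).2 hx₀
            have hhi : connBtw M (insert x₀ X') (insert y₀ Y') ≤ c + 1 := by
              have h3 := connBtw_insert_left_le (Y := insert y₀ Y') hX'E
                (hdjXY'y.mono_left hX') (hX hx₀X) (disjoint_left.1 hdjXY'y hx₀X)
              rwa [hv] at h3
            exact ⟨x₀, hx₀X, y₀, hy₀Y, by rw [hkc]; exact le_antisymm hhi hlo⟩
        · -- value c+1 on (X', Y'+y₀): X' must be nonempty
          have hX'ne : X'.Nonempty := by
            rcases eq_empty_or_nonempty X' with rfl | h
            · rw [connBtw_empty_left] at hv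
              exact absurd hv.symm (by simp [hcdef])
            · exact h
          obtain ⟨x₀, hx₀⟩ := hX'ne
          refine ⟨x₀, hX' hx₀, y₀, hy₀Y, ?_⟩
          rw [insert_eq_self.2 hx₀, hv, hkc]
      · push_neg at hbr2
        exfalso
        have hally : ∀ y ∈ Y, connBtw M (insert y Y') X ≤ c := by
          intro y hyY
          have hsymm : connBtw M (insert y Y') X = connBtw M X (insert y Y') :=
            connBtw_symm (insert_subset (hY hyY) hY'E) hX
          rw [hsymm]
          have hlo : c ≤ connBtw M X (insert y Y') := by
            rw [← hXY'c]; exact connBtw_mono subset_rfl (subset_insert _ _)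
          have hhi : connBtw M X (insert y Y') ≤ c + 1 := by
            have h3 := connBtw_insert_right_le hX (hXY.mono_right hY') (hY hyY)
              (disjoint_right.1 hXY hyY)
            rwa [hXY'c] at h3
          rcases enat_dichotomy hc_ne hlo hhi with h | h
          · exact le_of_eq h
          · exact absurd h (hbr2 y hyY)
        have hbaseflip : connBtw M Y' X = c := by
          rw [connBtw_symm hY'E hX, hXY'c]
        have := lemma_S hY' hY hXY.symm hX hc_ne hbaseflip hally
        rw [connBtw_symm hY hX] at this
        exact enat_not_succ_le_self hc_ne (hκ.trans this)
  · rintro ⟨x, hx, y, hy, h⟩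
    rw [← h]
    exact connBtw_mono (insert_subset hx hX') (insert_subset hy hY')
end
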